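/- arXiv:2212.14646 — 8 statements merged into one kernel-verified Lean document; each statement's English description precedes it below -/
import Mathlib

section
/- Let q ≥ 2 and let a be coprime to q with 1 ≤ a < q, and write a/q = [0; c_1, …, c_s] as a regular continued fraction. If every solution (x, y) of the congruence a·x ≡ y (mod q) with 1 ≤ x < q and 1 ≤ |y| < q satisfies x·|y| ≥ q/M, then every partial quotient satisfies c_j ≤ M. -/
/-- The value of the finite regular continued fraction `[0; c₁, …, c_s]`. -/
def cfVal : List ℕ → ℚ
  | [] => 0
  | c :: rest => 1 / (c + cfVal rest)

/-- `c` is the regular continued fraction expansion of `a/q`: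
nonempty, positive partial quotients, last quotient at least `2`, value `a/q`. -/
def IsCF (a q : ℕ) (c : List ℕ) : Prop :=
  c ≠ [] ∧ (∀ x ∈ c, 1 ≤ x) ∧ 2 ≤ c.getLast! ∧ cfVal c = (a : ℚ) / q

lemma cfVal_cons (c : ℕ) (r : List ℕ) : cfVal (c :: r) = 1 / (c + cfVal r) := rfl

lemma getLast!_cons_cons (a b : ℕ) (l : List ℕ) :
    (a :: b :: l).getLast! = (b :: l).getLast! := by
  show List.getLast _ _ = List.getLast _ _
  rw [List.getLast_cons]

lemma cfVal_bounds : ∀ (c : List ℕ), c ≠ [] → (∀ x ∈ c, 1 ≤ x) → 2 ≤ c.getLast! →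
    0 < cfVal c ∧ cfVal c < 1
  | [] => by simp
  | [x] => by
    intro _ _ hlast
    have hx : 2 ≤ x := by simpa [List.getLast!_cons_eq_getLastD] using hlast
    have hx' : (2:ℚ) ≤ (x:ℚ) := by exact_mod_cast hx
    rw [cfVal_cons]
    simp only [cfVal, add_zero]
    constructor
    · positivity
    · rw [div_lt_one (by linarith)]; linarith
  | a :: b :: l => by
    intro _ hpos hlast
    have ih := cfVal_bounds (b :: l) (by simp)
      (fun x hx => hpos x (by simp at hx ⊢; tauto))
      (by rw [← getLast!_cons_cons a]; exact hlast)
    have ha : 1 ≤ a := hpos a (by simp)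
    have ha' : (1:ℚ) ≤ (a:ℚ) := by exact_mod_cast ha
    rw [cfVal_cons]
    constructor
    · have : (0:ℚ) < (a:ℚ) + cfVal (b :: l) := by linarith [ih.1]
      positivity
    · rw [div_lt_one (by linarith [ih.1])]; linarith [ih.1]

/-- Key lemma: for each partial quotient `cj` of the CF of `a/q` there is a
solution `(X, Y)` of `a X ≡ Y (mod q)` with `cj * X * |Y| ≤ q`, together with a
slack estimate used for the induction when `Y < 0`. -/
lemma key : ∀ (c : List ℕ) (a q : ℕ), c ≠ [] → (∀ x ∈ c, 1 ≤ x) → 2 ≤ c.getLast! →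
    1 ≤ a → a < q → Nat.Coprime a q → cfVal c = (a : ℚ) / q →
    ∀ cj ∈ c, ∃ X Y : ℤ,
      1 ≤ X ∧ X < (q:ℤ) ∧ 1 ≤ |Y| ∧ |Y| < (q:ℤ) ∧ (q : ℤ) ∣ (a : ℤ) * X - Y ∧
      (cj : ℤ) * (X * |Y|) ≤ (q:ℤ) ∧
      (Y < 0 → (cj : ℤ) * Y ^ 2 ≤ (q:ℤ) * ((q:ℤ) - (cj:ℤ) * (X * |Y|)))
  | [] => by simp
  | [c1] => by
    intro a q _ hpos hlast ha haq hco hval cj hcj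
    have hcj' : cj = c1 := by simpa using hcj
    subst hcj'
    have hq0 : (0:ℚ) < q := by exact_mod_cast (by omega : 0 < q)
    have ha0 : (0:ℚ) < a := by exact_mod_cast ha
    have hc1 : 2 ≤ cj := by simpa [List.getLast!_cons_eq_getLastD] using hlast
    have hc10 : (0:ℚ) < (cj:ℚ) := by exact_mod_cast (by omega : 0 < cj)
    rw [cfVal_cons] at hval
    simp only [cfVal, add_zero] at hval
    have hq_eq : (q:ℚ) = (a:ℚ) * (cj:ℚ) := by
      field_simp at hval
      linarith [hval]
    have hq_eqn : q = a * cj := by exact_mod_cast hq_eq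
    have ha1 : a = 1 := hco.eq_one_of_dvd ⟨cj, hq_eqn⟩
    subst ha1
    have hq_eqn' : q = cj := by omega
    refine ⟨1, 1, le_refl _, by exact_mod_cast haq, by norm_num, ?_, by norm_num, ?_, ?_⟩
    · norm_num; exact_mod_cast haq
    · norm_num; exact_mod_cast hq_eqn'.ge
    · intro hcon; norm_num at hcon
  | c1 :: b :: r => by
    intro a q _ hpos hlast ha haq hco hval cj hcj
    set rest := b :: r with hrest
    have hrestpos : ∀ x ∈ rest, 1 ≤ x := fun x hx => hpos x (by simp [hrest] at hx ⊢; tauto)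
    have hrestlast : 2 ≤ rest.getLast! := by
      rw [getLast!_cons_cons] at hlast; exact hlast
    have hc1pos : 1 ≤ c1 := hpos c1 (by simp)
    obtain ⟨ht0, ht1⟩ := cfVal_bounds rest (by simp [hrest]) hrestpos hrestlast
    have hq0 : (0:ℚ) < q := by exact_mod_cast (by omega : 0 < q)
    have ha0 : (0:ℚ) < a := by exact_mod_cast ha
    have hc1q : (1:ℚ) ≤ (c1:ℚ) := by exact_mod_cast hc1pos
    rw [cfVal_cons] at hval
    have hct : (0:ℚ) < (c1:ℚ) + cfVal rest := by linarith
    -- q = a * (c1 + t)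
    have hq_eq : (q:ℚ) = (a:ℚ) * ((c1:ℚ) + cfVal rest) := by
      field_simp at hval
      linarith [hval]
    have hlt1 : a * c1 < q := by
      have : (a:ℚ) * (c1:ℚ) < q := by nlinarith
      exact_mod_cast this
    have hlt2 : q < a * c1 + a := by
      have : (q:ℚ) < (a:ℚ) * (c1:ℚ) + a := by nlinarith
      exact_mod_cast this
    set a' := q - a * c1 with ha'def
    have ha'1 : 1 ≤ a' := by omega
    have ha'2 : a' < a := by omega
    have ha2 : 2 ≤ a := by omega
    have hcast : (a':ℚ) = (q:ℚ) - (a:ℚ) * (c1:ℚ) := by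
      have : (a':ℕ) + a * c1 = q := by omega
      have := congrArg (fun n : ℕ => (n:ℚ)) this
      push_cast at this
      linarith
    have hvalrest : cfVal rest = (a':ℚ) / a := by
      rw [hcast, hq_eq]; field_simp; ring
    have hco' : Nat.Coprime a' a := by
      have h2 : Nat.Coprime q a := hco.symm
      rw [show q = a' + c1 * a by rw [Nat.mul_comm c1 a]; omega] at h2
      exact (Nat.coprime_add_mul_right_left a' a c1).mp h2
    rcases List.mem_cons.mp hcj with rfl | hcj'
    · -- head: X = 1, Y = a
      refine ⟨1, (a:ℤ), le_refl _, by exact_mod_cast lt_trans (by exact_mod_cast ha2.trans_lt' one_lt_two) haq, ?_, ?_, ⟨0, by ring⟩, ?_, ?_⟩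
      · rw [abs_of_pos (by exact_mod_cast ha : (0:ℤ) < a)]; exact_mod_cast ha
      · rw [abs_of_pos (by exact_mod_cast ha : (0:ℤ) < a)]; exact_mod_cast haq
      · rw [abs_of_pos (by exact_mod_cast ha : (0:ℤ) < a)]
        have : (cj:ℤ) * a ≤ q := by exact_mod_cast (by rw [Nat.mul_comm cj a]; omega : cj * a ≤ q)
        linarith [this]
      · intro hcon
        have : (0:ℤ) < a := by exact_mod_cast ha
        linarith
    · -- tail: lift the solution from level (a', a)
      obtain ⟨x, y, hx1, hx2, hy1, hy2, hdvd, hle, hneg⟩ :=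
        key rest a' a (by simp [hrest]) hrestpos hrestlast ha'1 ha'2 hco' hvalrest cj hcj'
      have hqa' : (q:ℤ) = (a':ℤ) + (c1:ℤ) * (a:ℤ) := by exact_mod_cast (by rw [Nat.mul_comm c1 a]; omega : q = a' + c1 * a)
      have hqaZ : (a:ℤ) < q := by exact_mod_cast haq
      have haZ : (2:ℤ) ≤ a := by exact_mod_cast ha2
      have hqZ : (0:ℤ) < q := by linarith
      have haZ0 : (0:ℤ) < a := by linarith
      have hdvd2 : (a:ℤ) ∣ (q:ℤ) * x - y := by
        have e : (q:ℤ) * x - y = ((a':ℤ) * x - y) + (a:ℤ) * ((c1:ℤ) * x) := by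
          rw [hqa']; ring
        rw [e]
        exact dvd_add hdvd (Dvd.intro _ rfl)
      obtain ⟨X, hX⟩ := hdvd2
      have hcj0 : (0:ℤ) ≤ cj := by positivity
      -- basic bounds on X
      have haX2 : (2:ℤ) ≤ (a:ℤ) * X := by
        rw [← hX]
        have h1 : (q:ℤ) * 1 ≤ q * x := by
          exact mul_le_mul_of_nonneg_left hx1 (le_of_lt hqZ)
        have h2 : y ≤ |y| := le_abs_self y
        linarith
      have hX1 : 1 ≤ X := by
        by_contra hcon
        push_neg at hcon
        have : (a:ℤ) * X ≤ 0 :=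
          mul_nonpos_of_nonneg_of_nonpos (le_of_lt haZ0) (by omega)
        linarith
      have hXq : X < q := by
        have h1 : (q:ℤ) * x ≤ q * ((a:ℤ) - 1) :=
          mul_le_mul_of_nonneg_left (by omega) (le_of_lt hqZ)
        have h2 : -y ≤ |y| := neg_le_abs y
        have : (a:ℤ) * X < a * q := by
          rw [← hX]; linarith [h1, h2, hy2, hqaZ]
        exact lt_of_mul_lt_mul_left this (le_of_lt haZ0)
      have hy0 : y ≠ 0 := by
        intro h0; rw [h0] at hy1; simp at hy1
      refine ⟨X, -y, hX1, hXq, ?_, ?_, ⟨x, by linarith [hX]⟩, ?_, ?_⟩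
      · rw [abs_neg]; exact hy1
      · rw [abs_neg]; linarith
      · -- cj * (X * |−y|) ≤ q
        rw [abs_neg]
        rcases lt_or_gt_of_ne hy0 with hylt | hygt
        · -- y < 0 : |y| = -y
          rw [abs_of_neg hylt] at hle hy2 ⊢
          have hnegs := hneg hylt
          rw [abs_of_neg hylt] at hnegs
          have e : (a:ℤ) * ((cj:ℤ) * (X * (-y))) =
              (q:ℤ) * ((cj:ℤ) * (x * (-y))) + (cj:ℤ) * y ^ 2 := by
            linear_combination ((cj:ℤ) * y) * hX
          have hs : (0:ℤ) ≤ (a:ℤ) - (cj:ℤ) * (x * (-y)) := by linarith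
          have h1 : (a:ℤ) * ((a:ℤ) - (cj:ℤ) * (x * (-y))) ≤
              (q:ℤ) * ((a:ℤ) - (cj:ℤ) * (x * (-y))) :=
            mul_le_mul_of_nonneg_right (le_of_lt hqaZ) hs
          have h2 : (a:ℤ) * ((cj:ℤ) * (X * (-y))) ≤ a * q := by linarith [e, h1, hnegs]
          exact le_of_mul_le_mul_left h2 haZ0
        · -- y > 0 : |y| = y
          rw [abs_of_pos hygt] at hle ⊢
          have e : (a:ℤ) * ((cj:ℤ) * (X * y)) =
              (q:ℤ) * ((cj:ℤ) * (x * y)) - (cj:ℤ) * y ^ 2 := by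
            linear_combination (-(cj:ℤ) * y) * hX
          have h1 : (q:ℤ) * ((cj:ℤ) * (x * y)) ≤ q * a :=
            mul_le_mul_of_nonneg_left hle (le_of_lt hqZ)
          have h2 : (0:ℤ) ≤ (cj:ℤ) * y ^ 2 := by positivity
          have h3 : (a:ℤ) * ((cj:ℤ) * (X * y)) ≤ a * q := by linarith [e, h1, h2]
          exact le_of_mul_le_mul_left h3 haZ0
      · -- slack condition for Y = -y < 0, i.e. y > 0
        intro hYneg
        have hygt : 0 < y := by linarith
        rw [abs_neg, abs_of_pos hygt]
        rw [abs_of_pos hygt] at hle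
        have e : (a:ℤ) * ((q:ℤ) - (cj:ℤ) * (X * y)) =
            (q:ℤ) * ((a:ℤ) - (cj:ℤ) * (x * y)) + (cj:ℤ) * y ^ 2 := by
          linear_combination ((cj:ℤ) * y) * hX
        have hs : (0:ℤ) ≤ (a:ℤ) - (cj:ℤ) * (x * y) := by linarith
        have hy2' : (0:ℤ) ≤ (cj:ℤ) * y ^ 2 := by positivity
        have t1 : (0:ℤ) ≤ q * (q * ((a:ℤ) - (cj:ℤ) * (x * y))) :=
          mul_nonneg (le_of_lt hqZ) (mul_nonneg (le_of_lt hqZ) hs)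
        have t2 : (a:ℤ) * ((cj:ℤ) * y ^ 2) ≤ q * ((cj:ℤ) * y ^ 2) :=
          mul_le_mul_of_nonneg_right (le_of_lt hqaZ) hy2'
        have e' : (q:ℤ) * ((a:ℤ) * ((q:ℤ) - (cj:ℤ) * (X * y))) =
            (q:ℤ) * ((q:ℤ) * ((a:ℤ) - (cj:ℤ) * (x * y)) + (cj:ℤ) * y ^ 2) := by
          rw [e]
        have h4 : (a:ℤ) * ((cj:ℤ) * ((-y) ^ 2)) ≤
            (a:ℤ) * ((q:ℤ) * ((q:ℤ) - (cj:ℤ) * (X * y))) := by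
          linarith [e', t1, t2]
        exact le_of_mul_le_mul_left h4 haZ0

theorem stmt_0 (q a : ℕ) (hq : 2 ≤ q) (ha : 1 ≤ a) (ha' : a < q)
    (hco : Nat.Coprime a q) (c : List ℕ) (hc : IsCF a q c) (M : ℝ) (hM : 0 < M)
    (h : ∀ x y : ℤ, 1 ≤ x → x < (q : ℤ) → 1 ≤ |y| → |y| < (q : ℤ) →
      (a : ℤ) * x ≡ y [ZMOD (q : ℤ)] → (q : ℝ) / M ≤ ((x * |y| : ℤ) : ℝ)) :
    ∀ cj ∈ c, (cj : ℝ) ≤ M := by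
  obtain ⟨hne, hpos, hlast, hval⟩ := hc
  intro cj hcj
  obtain ⟨X, Y, h1, h2, h3, h4, hdvd, hle, -⟩ :=
    key c a q hne hpos hlast ha ha' hco hval cj hcj
  have hmod : (a : ℤ) * X ≡ Y [ZMOD (q : ℤ)] :=
    Int.modEq_iff_dvd.mpr (dvd_sub_comm.mp hdvd)
  have hq' := h X Y h1 h2 h3 h4 hmod
  have hleR : (cj : ℝ) * ((X * |Y| : ℤ) : ℝ) ≤ (q : ℝ) := by exact_mod_cast hle
  have hqpos : (0:ℝ) < q := by positivity
  have hcj0 : (0:ℝ) ≤ (cj:ℝ) := by positivity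
  rw [div_le_iff₀ hM] at hq'
  nlinarith [mul_le_mul_of_nonneg_left hq' hcj0]
end

section
/- Let q ≥ 2 and let a be coprime to q with 1 ≤ a < q, and write a/q = [0; c_1, …, c_s]. If c_j ≤ M for all j ∈ [s], then every solution (x, y) of the congruence a·x ≡ y (mod q) with 1 ≤ x < q and 1 ≤ |y| < q satisfies x·|y| ≥ q/(4M). -/
/-- Convergent machinery: `pqA c k = ((p_{k-1}, q_{k-1}), (p_k, q_k))`. -/
def pqA (c : List ℕ) : ℕ → (ℤ × ℤ) × (ℤ × ℤ)
  | 0 => ((1, 0), (0, 1))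
  | k + 1 =>
    ((pqA c k).2,
      ((c.getD k 0 : ℤ) * (pqA c k).2.1 + (pqA c k).1.1,
       (c.getD k 0 : ℤ) * (pqA c k).2.2 + (pqA c k).1.2))

lemma pqA_succ_fst (c : List ℕ) (k : ℕ) : (pqA c (k+1)).1 = (pqA c k).2 := rfl

lemma pqA_det (c : List ℕ) (k : ℕ) :
    (pqA c k).2.1 * (pqA c k).1.2 - (pqA c k).1.1 * (pqA c k).2.2 = (-1)^(k+1) := by
  induction k with
  | zero => simp [pqA]
  | succ k ih =>
      show ((c.getD k 0 : ℤ) * (pqA c k).2.1 + (pqA c k).1.1) * (pqA c k).2.2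
          - (pqA c k).2.1 * ((c.getD k 0 : ℤ) * (pqA c k).2.2 + (pqA c k).1.2) = (-1)^(k+2)
      rw [pow_succ]
      linear_combination (-1 : ℤ) * ih

lemma cfVal_nonneg : ∀ c : List ℕ, 0 ≤ cfVal c := by
  intro c
  induction c with
  | nil => simp [cfVal]
  | cons x r ih => simp only [cfVal]; positivity

lemma pqA_pos (c : List ℕ) (h1 : ∀ k < c.length, 1 ≤ (c.getD k 0 : ℤ)) :
    ∀ k, k ≤ c.length →
      0 ≤ (pqA c k).1.1 ∧ 0 ≤ (pqA c k).2.1 ∧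
      0 ≤ (pqA c k).1.2 ∧ 1 ≤ (pqA c k).2.2 ∧ (pqA c k).1.2 ≤ (pqA c k).2.2 := by
  intro k
  induction k with
  | zero => intro _; simp [pqA]
  | succ k ih =>
      intro hk
      obtain ⟨h1', h2', h3', h4', h5'⟩ := ih (Nat.le_of_succ_le hk)
      have hc := h1 k (by omega)
      simp only [pqA]
      refine ⟨h2', by nlinarith, by linarith, by nlinarith, by nlinarith⟩

lemma pqA_val (c : List ℕ) (h1 : ∀ x ∈ c, 1 ≤ x) :
    ∀ k, k ≤ c.length →
      cfVal c * (((pqA c k).2.2 : ℚ) + ((pqA c k).1.2 : ℚ) * cfVal (c.drop k))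
        = ((pqA c k).2.1 : ℚ) + ((pqA c k).1.1 : ℚ) * cfVal (c.drop k) := by
  intro k
  induction k with
  | zero => intro _; simp [pqA]
  | succ k ih =>
      intro hk
      have hk' : k < c.length := by omega
      have ih' := ih (Nat.le_of_succ_le hk)
      have hmem : c.getD k 0 ∈ c := by
        rw [List.getD_eq_getElem c 0 hk']; exact List.getElem_mem hk'
      have hdrop : c.drop k = c.getD k 0 :: c.drop (k+1) := by
        rw [List.getD_eq_getElem c 0 hk']; exact List.drop_eq_getElem_cons hk'
      have hc1 : (1 : ℚ) ≤ (c.getD k 0 : ℚ) := by exact_mod_cast h1 _ hmem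
      have ht : (0 : ℚ) ≤ cfVal (c.drop (k+1)) := cfVal_nonneg _
      have hne : ((c.getD k 0 : ℚ) + cfVal (c.drop (k+1))) ≠ 0 := by positivity
      have hu : cfVal (c.drop k) * ((c.getD k 0 : ℚ) + cfVal (c.drop (k+1))) = 1 := by
        rw [hdrop]; simp only [cfVal]; exact one_div_mul_cancel hne
      simp only [pqA]
      push_cast
      linear_combination ((c.getD k 0 : ℚ) + cfVal (c.drop (k+1))) * ih'
        - (cfVal c * ((pqA c k).1.2 : ℚ) - ((pqA c k).1.1 : ℚ)) * hu

lemma pqA_ident (a q : ℕ) (hq : 2 ≤ q) (ha : 1 ≤ a) (hco : Nat.Coprime a q)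
    (c : List ℕ) (h1 : ∀ x ∈ c, 1 ≤ x) (hval : cfVal c = (a : ℚ) / q) :
    ((pqA c c.length).2.2 : ℤ) = (q : ℤ) ∧ ((pqA c c.length).2.1 : ℤ) = (a : ℤ) := by
  have hv := pqA_val c h1 c.length le_rfl
  rw [List.drop_length] at hv
  simp only [cfVal, mul_zero, add_zero] at hv
  rw [hval] at hv
  have hq0 : (q : ℚ) ≠ 0 := by positivity
  have hint : (a : ℤ) * (pqA c c.length).2.2 = (q : ℤ) * (pqA c c.length).2.1 := by
    have : (a : ℚ) * ((pqA c c.length).2.2 : ℚ) = (q : ℚ) * ((pqA c c.length).2.1 : ℚ) := by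
      field_simp at hv
      linarith [hv]
    exact_mod_cast this
  -- coprimality of p_s, q_s
  have hdet := pqA_det c c.length
  have hcop : IsCoprime ((pqA c c.length).2.1) ((pqA c c.length).2.2) := by
    rcases Nat.even_or_odd (c.length + 1) with he | ho
    · exact ⟨(pqA c c.length).1.2, -(pqA c c.length).1.1, by
        rw [he.neg_one_pow] at hdet; linarith [hdet]⟩
    · exact ⟨-(pqA c c.length).1.2, (pqA c c.length).1.1, by
        rw [ho.neg_one_pow] at hdet; linarith [hdet]⟩
  have hcoaq : IsCoprime ((q:ℤ)) ((a:ℤ)) := by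
    rw [Int.isCoprime_iff_gcd_eq_one]
    simpa [Int.gcd, Nat.coprime_comm] using hco.symm
  have hd1 : ((pqA c c.length).2.2 : ℤ) ∣ (q : ℤ) := by
    have : ((pqA c c.length).2.2 : ℤ) ∣ (q : ℤ) * (pqA c c.length).2.1 := ⟨(a:ℤ), by linarith [hint]⟩
    exact (hcop.symm.dvd_of_dvd_mul_right) this
  have hd2 : ((q : ℤ)) ∣ (pqA c c.length).2.2 := by
    have : (q : ℤ) ∣ (a : ℤ) * (pqA c c.length).2.2 := ⟨(pqA c c.length).2.1, by linarith [hint]⟩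
    exact (hcoaq.dvd_of_dvd_mul_left) this
  have hQpos : (0:ℤ) ≤ (pqA c c.length).2.2 := by
    have := pqA_pos c (fun k hk => by
      exact_mod_cast h1 _ (by rw [List.getD_eq_getElem c 0 hk]; exact List.getElem_mem hk)) c.length le_rfl
    linarith [this.2.2.2.1]
  have hQq : ((pqA c c.length).2.2 : ℤ) = (q : ℤ) := Int.dvd_antisymm hQpos (by positivity) hd1 hd2
  refine ⟨hQq, ?_⟩
  have : (q : ℤ) * (pqA c c.length).2.1 = (q:ℤ) * a := by rw [← hint, hQq]; ring
  have hqne : (q : ℤ) ≠ 0 := by positivity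
  exact mul_left_cancel₀ hqne this


set_option maxHeartbeats 2000000 in
theorem stmt_1 (q a : ℕ) (hq : 2 ≤ q) (ha : 1 ≤ a) (ha' : a < q)
    (hco : Nat.Coprime a q) (c : List ℕ) (hc : IsCF a q c) (M : ℝ) (hM : 1 ≤ M)
    (hbdd : ∀ cj ∈ c, (cj : ℝ) ≤ M) :
    ∀ x y : ℤ, 1 ≤ x → x < (q : ℤ) → 1 ≤ |y| → |y| < (q : ℤ) →
      (a : ℤ) * x ≡ y [ZMOD (q : ℤ)] → (q : ℝ) / (4 * M) ≤ ((x * |y| : ℤ) : ℝ) := by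
  intro x y hx1 hxq hy1 hyq hmod
  obtain ⟨-, h1, -, hval⟩ := hc
  set s := c.length with hs
  have h1' : ∀ k < c.length, 1 ≤ (c.getD k 0 : ℤ) := fun k hk => by
    exact_mod_cast h1 _ (by rw [List.getD_eq_getElem c 0 hk]; exact List.getElem_mem hk)
  obtain ⟨hQs, hPs⟩ := pqA_ident a q hq ha hco c h1 hval
  -- abbreviations
  set P : ℕ → ℤ := fun k => (pqA c k).2.1 with hP
  set Q : ℕ → ℤ := fun k => (pqA c k).2.2 with hQ
  set D : ℕ → ℤ := fun k => (a : ℤ) * Q k - (q : ℤ) * P k with hD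
  set d : ℕ → ℤ := fun k => (-1)^k * D k with hd
  have hPsucc : ∀ k, P (k+1) = (c.getD k 0 : ℤ) * P k + (pqA c k).1.1 := fun k => rfl
  have hQsucc : ∀ k, Q (k+1) = (c.getD k 0 : ℤ) * Q k + (pqA c k).1.2 := fun k => rfl
  have hprev1 : ∀ k, (pqA c (k+1)).1.1 = P k := fun k => rfl
  have hprev2 : ∀ k, (pqA c (k+1)).1.2 = Q k := fun k => rfl
  have hpos := pqA_pos c h1'
  have hQs' : Q s = (q : ℤ) := hQs
  have hPs' : P s = (a : ℤ) := hPs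
  -- determinant-type identity for D
  have hDdet : ∀ k, Q (k+1) * D k - Q k * D (k+1) = (-1)^k * q := by
    intro k
    have hdet := pqA_det c (k+1)
    rw [hprev1, hprev2] at hdet
    have hpow : ((-1:ℤ))^(k+1+1) = (-1)^k := by rw [pow_succ, pow_succ]; ring
    rw [hpow] at hdet
    simp only [hD]
    linear_combination ((q : ℤ)) * hdet
  -- recurrence for D
  have hDrec : ∀ k, D (k+2) = (c.getD (k+1) 0 : ℤ) * D (k+1) + D k := by
    intro k
    simp only [hD, hQsucc (k+1), hPsucc (k+1), hprev1, hprev2]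
    ring
  have hDs : D s = 0 := by simp only [hD]; rw [hQs', hPs']; ring
  have hqne : (q : ℤ) ≠ 0 := by positivity
  -- sign and size of d
  have hsign : ∀ m k, k + m = s → 0 ≤ d k ∧ (k < s → 1 ≤ d k) := by
    intro m
    induction m using Nat.strong_induction_on with
    | _ m ih =>
      intro k hk
      match m, hk with
      | 0, hk =>
        have : k = s := by omega
        subst this
        simp [hd, hDs]
      | 1, hk =>
        have hks : k + 1 = s := hk
        have h2 := hDdet k
        rw [hks, hDs, hQs'] at h2
        have hDk : D k = (-1)^k := by
          have : (q:ℤ) * D k = (q:ℤ) * (-1)^k := by linarith [h2]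
          exact mul_left_cancel₀ hqne this
        have : d k = 1 := by
          simp only [hd, hDk, ← pow_add]
          exact Even.neg_one_pow ⟨k, by ring⟩
        refine ⟨by omega, fun _ => by omega⟩
      | (m+2), hk =>
        have ih1 := ih (m+1) (by omega) (k+1) (by omega)
        have ih2 := ih m (by omega) (k+2) (by omega)
        have hc1 := h1' (k+1) (by omega)
        have heq : d k = d (k+2) + (c.getD (k+1) 0 : ℤ) * d (k+1) := by
          have e1 : ((-1:ℤ))^(k+2) = (-1)^k := by rw [pow_succ, pow_succ]; ring
          have e2 : ((-1:ℤ))^(k+1) = -(-1)^k := by rw [pow_succ]; ring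
          simp only [hd, hDrec k, e1, e2]
          ring
        have hd1 : 1 ≤ d (k+1) := ih1.2 (by omega)
        have hd2 : 0 ≤ d (k+2) := ih2.1
        constructor
        · nlinarith
        · intro _; nlinarith
  have hsign' : ∀ k ≤ s, 0 ≤ d k ∧ (k < s → 1 ≤ d k) := fun k hk =>
    hsign (s - k) k (by omega)
  -- monotonicity of d
  have hmono : ∀ k, k + 1 ≤ s → d (k+1) ≤ d k := by
    intro k hk
    rcases Nat.lt_or_ge (k+1) s with h | h
    · have heq : d k = d (k+2) + (c.getD (k+1) 0 : ℤ) * d (k+1) := by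
        have e1 : ((-1:ℤ))^(k+2) = (-1)^k := by rw [pow_succ, pow_succ]; ring
        have e2 : ((-1:ℤ))^(k+1) = -(-1)^k := by rw [pow_succ]; ring
        simp only [hd, hDrec k, e1, e2]
        ring
      have hc1 := h1' (k+1) (by omega)
      have hd1 := (hsign' (k+1) (by omega)).1
      have hd2 := (hsign' (k+2) (by omega)).1
      nlinarith
    · have : k + 1 = s := by omega
      rw [this]
      have : d s = 0 := by simp [hd, hDs]
      rw [this]
      exact (hsign' k (by omega)).1
  -- best approximation
  have hbest : ∀ k, k + 1 ≤ s → ∀ z m : ℤ, 1 ≤ z → z < Q (k+1) → d k ≤ |(a:ℤ) * z - q * m| := by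
    intro k hk z m hz1 hz2
    have hdet := pqA_det c (k+1)
    rw [hprev1, hprev2] at hdet
    have hpow2 : ((-1:ℤ))^(k+1+1) = (-1)^k := by rw [pow_succ, pow_succ]; ring
    rw [hpow2] at hdet
    have hponce : ((-1:ℤ))^k * (-1)^k = 1 := by
      rw [← pow_add]; exact Even.neg_one_pow ⟨k, by ring⟩
    set u : ℤ := (-1)^k * (z * P (k+1) - m * Q (k+1)) with hu
    set v : ℤ := (-1)^k * (m * Q k - z * P k) with hv
    have hxeq : u * Q k + v * Q (k+1) = z := by
      simp only [hu, hv]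
      linear_combination ((-1:ℤ)^k * z) * hdet + z * hponce
    have hmeq : u * P k + v * P (k+1) = m := by
      simp only [hu, hv]
      linear_combination ((-1:ℤ)^k * m) * hdet + m * hponce
    have hkey : (a:ℤ) * z - q * m = u * D k + v * D (k+1) := by
      simp only [hD]
      linear_combination (a : ℤ) * hxeq.symm - (q : ℤ) * hmeq.symm
    have hDk : D k = (-1)^k * d k := by
      simp only [hd]; rw [← mul_assoc, hponce, one_mul]
    have hDk1 : D (k+1) = -((-1)^k * d (k+1)) := by
      simp only [hd]
      have : ((-1:ℤ))^(k+1) = -(-1)^k := by rw [pow_succ]; ring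
      rw [this]
      linear_combination (-(D (k+1))) * hponce
    set w : ℤ := u * d k - v * d (k+1) with hw
    have hkey2 : (a:ℤ) * z - q * m = (-1)^k * w := by
      rw [hkey, hDk, hDk1, hw]; ring
    have habs : |(a:ℤ) * z - q * m| = |w| := by
      rw [hkey2, abs_mul, abs_pow, abs_neg, abs_one, one_pow, one_mul]
    rw [habs]
    have hdk0 : 0 ≤ d k := (hsign' k (by omega)).1
    have hdk10 : 0 ≤ d (k+1) := (hsign' (k+1) hk).1
    have hQk : 1 ≤ Q k := (hpos k (by omega)).2.2.2.1
    have hQk1 : 1 ≤ Q (k+1) := (hpos (k+1) hk).2.2.2.1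
    rcases eq_or_ne u 0 with hu0 | hu0
    · exfalso
      rw [hu0, zero_mul, zero_add] at hxeq
      have hv1 : 1 ≤ v := by
        by_contra hv1
        push_neg at hv1
        have hv0 : v ≤ 0 := by omega
        have := mul_nonpos_of_nonpos_of_nonneg hv0 (by linarith : (0:ℤ) ≤ Q (k+1))
        linarith
      have : Q (k+1) ≤ v * Q (k+1) := le_mul_of_one_le_left (by linarith) hv1
      linarith
    · rcases lt_trichotomy v 0 with hvn | hv0 | hvp
      · -- v < 0 : if u ≤ 0, z < 0 contra; so u > 0 and w ≥ d k
        have hup : 0 < u := by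
          by_contra hun
          push_neg at hun
          have hu1 : u ≤ -1 := by omega
          have hv1 : v ≤ -1 := by omega
          have t1 : u * Q k ≤ -1 * Q k :=
            mul_le_mul_of_nonneg_right hu1 (by linarith)
          have t2 : v * Q (k+1) ≤ -1 * Q (k+1) :=
            mul_le_mul_of_nonneg_right hv1 (by linarith)
          linarith
        have hu1 : 1 ≤ u := hup
        have t1 : d k ≤ u * d k := le_mul_of_one_le_left hdk0 hu1
        have t2 : 0 ≤ (-v) * d (k+1) := mul_nonneg (by linarith) hdk10
        have : d k ≤ w := by rw [hw]; linarith
        exact le_trans this (le_abs_self w)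
      · rw [hv0] at hw
        have hwu : w = u * d k := by rw [hw]; ring
        rw [hwu, abs_mul, abs_of_nonneg hdk0]
        exact le_mul_of_one_le_left hdk0 (Int.one_le_abs hu0)
      · -- v > 0 : u must be < 0, w ≤ -(d k)
        have hun : u < 0 := by
          by_contra hup
          push_neg at hup
          have hu1 : 1 ≤ u := by omega
          have t1 : Q k ≤ u * Q k := le_mul_of_one_le_left (by linarith) hu1
          have t2 : Q (k+1) ≤ v * Q (k+1) := le_mul_of_one_le_left (by linarith) hvp
          linarith
        have t1 : d k ≤ (-u) * d k := le_mul_of_one_le_left hdk0 (by omega)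
        have t2 : 0 ≤ v * d (k+1) := mul_nonneg (by linarith) hdk10
        have : d k ≤ -w := by rw [hw]; linarith
        calc d k ≤ -w := this
          _ ≤ |w| := neg_le_abs w
  -- find the index j with Q j ≤ x < Q (j+1)
  classical
  have hex : ∃ n, x < Q n := ⟨s, by rw [hQs']; exact hxq⟩
  set k0 := Nat.find hex with hk0
  have hk0spec : x < Q k0 := Nat.find_spec hex
  have hk0le : k0 ≤ s := Nat.find_le (show x < Q s by rw [hQs']; exact hxq)
  have hk0ne : k0 ≠ 0 := by
    intro h0
    rw [h0] at hk0spec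
    have : Q 0 = 1 := rfl
    omega
  obtain ⟨j, hj⟩ := Nat.exists_eq_succ_of_ne_zero hk0ne
  have hjlt : ¬ x < Q j := Nat.find_min hex (by omega)
  push_neg at hjlt
  rw [hj] at hk0spec hk0le
  -- extract m from the congruence
  have hdvd : (q : ℤ) ∣ y - (a:ℤ) * x := Int.ModEq.dvd hmod
  obtain ⟨m, hm⟩ := hdvd
  have hyeq : (a:ℤ) * x - q * (-m) = y := by linarith [hm]
  -- apply best approximation
  have hybound : d j ≤ |y| := by
    rw [← hyeq]
    exact hbest j hk0le x (-m) hx1 hk0spec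
  -- the identity q = Q (j+1) * d j + Q j * d (j+1)
  have hqid : (q : ℤ) = Q (j+1) * d j + Q j * d (j+1) := by
    have h2 := hDdet j
    have hponce : ((-1:ℤ))^j * (-1)^j = 1 := by
      rw [← pow_add]; exact Even.neg_one_pow ⟨j, by ring⟩
    have e2 : ((-1:ℤ))^(j+1) = -(-1)^j := by rw [pow_succ]; ring
    simp only [hd, e2]
    linear_combination (-((-1:ℤ)^j)) * h2 - (q:ℤ) * hponce
  -- bounds
  have hjs : j < s := by omega
  have hdj1 : 1 ≤ d j := (hsign' j (by omega)).2 hjs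
  have hdmono : d (j+1) ≤ d j := hmono j hk0le
  have hQj : 1 ≤ Q j := (hpos j (by omega)).2.2.2.1
  have hQprev : (pqA c j).1.2 ≤ Q j := (hpos j (by omega)).2.2.2.2
  have hQj1 : Q (j+1) = (c.getD j 0 : ℤ) * Q j + (pqA c j).1.2 := hQsucc j
  have hcj : (1:ℤ) ≤ (c.getD j 0 : ℤ) := h1' j hjs
  have hqle : (q : ℤ) ≤ ((c.getD j 0 : ℤ) + 2) * (Q j * d j) := by
    have hdj10 : 0 ≤ d (j+1) := (hsign' (j+1) hk0le).1
    have hdj0 : (0:ℤ) ≤ d j := by linarith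
    have t1 : (pqA c j).1.2 * d j ≤ Q j * d j := mul_le_mul_of_nonneg_right hQprev hdj0
    have t2 : Q j * d (j+1) ≤ Q j * d j := mul_le_mul_of_nonneg_left hdmono (by linarith)
    nlinarith [hqid, hQj1, t1, t2]
  have hxyb : Q j * d j ≤ x * |y| := by
    have hdj0 : (0:ℤ) ≤ d j := by linarith
    have h1a : Q j * d j ≤ x * d j := mul_le_mul_of_nonneg_right hjlt hdj0
    have h2a : x * d j ≤ x * |y| := mul_le_mul_of_nonneg_left hybound (by linarith)
    linarith
  -- move to ℝ
  have hcjM : (c.getD j 0 : ℝ) ≤ M := by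
    have hmem : c.getD j 0 ∈ c := by
      rw [List.getD_eq_getElem c 0 hjs]; exact List.getElem_mem hjs
    exact hbdd _ hmem
  have hqR : (q : ℝ) ≤ ((c.getD j 0 : ℝ) + 2) * ((x * |y| : ℤ) : ℝ) := by
    have := hqle.trans (mul_le_mul_of_nonneg_left hxyb (by linarith : (0:ℤ) ≤ (c.getD j 0 : ℤ) + 2))
    calc (q:ℝ) ≤ (((((c.getD j 0 : ℤ) + 2) * (x * |y|)) : ℤ) : ℝ) := by exact_mod_cast this
      _ = ((c.getD j 0 : ℝ) + 2) * ((x * |y| : ℤ) : ℝ) := by push_cast; ring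
  have hxy1 : (1 : ℝ) ≤ ((x * |y| : ℤ) : ℝ) := by
    have : (1:ℤ) ≤ x * |y| := by nlinarith
    exact_mod_cast this
  rw [div_le_iff₀ (by positivity)]
  have hcj0 : (0:ℝ) ≤ (c.getD j 0 : ℝ) := by positivity
  have t1 : ((c.getD j 0 : ℝ) + 2) * ((x * |y| : ℤ) : ℝ) ≤ (M + 2) * ((x * |y| : ℤ) : ℝ) :=
    mul_le_mul_of_nonneg_right (by linarith) (by linarith)
  have t2 : (M + 2) * ((x * |y| : ℤ) : ℝ) ≤ (4 * M) * ((x * |y| : ℤ) : ℝ) :=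
    mul_le_mul_of_nonneg_right (by linarith) (by linarith)
  linarith
end

section
/- For positive integers c_1, …, c_t with c_t ≥ 2 and any positive integer X, the continuant identity K(c_1, …, c_{t-1}, c_t, X, 1, c_t − 1, c_{t-1}, …, c_1) = K(c_1, …, c_t) · K(1, c_t − 1, c_{t-1}, …, c_1) · (X + 1) holds. -/
/-- The continuant `K(d₁, …, d_k)`, defined via the product of the matrices
`[[dᵢ, 1], [1, 0]]`; it satisfies `K() = 1`, `K(d₁) = d₁` and
`K(d₁, …, d_k) = d_k · K(d₁, …, d_{k-1}) + K(d₁, …, d_{k-2})`. -/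
def contK (l : List ℕ) : ℕ :=
  ((l.map (fun d => !![d, 1; 1, 0])).prod : Matrix (Fin 2) (Fin 2) ℕ) 0 0

open Matrix in
private lemma transM (d : ℕ) : (!![d, 1; 1, 0] : Matrix (Fin 2) (Fin 2) ℕ)ᵀ = !![d, 1; 1, 0] := by
  ext i j
  fin_cases i <;> fin_cases j <;> simp

open Matrix in
private lemma prod_reverse (l : List ℕ) :
    ((l.reverse.map (fun d => !![d, 1; 1, 0])).prod : Matrix (Fin 2) (Fin 2) ℕ)
      = ((l.map (fun d => !![d, 1; 1, 0])).prod)ᵀ := by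
  induction l with
  | nil => simp
  | cons d t ih =>
      simp only [List.reverse_cons, List.map_append, List.prod_append, List.map_cons,
        List.map_nil, List.prod_cons, List.prod_nil, mul_one, Matrix.transpose_mul, ih, transM]

theorem stmt_2 (l : List ℕ) (hne : l ≠ []) (hpos : ∀ x ∈ l, 1 ≤ x)
    (hlast : 2 ≤ l.getLast hne) (X : ℕ) (hX : 1 ≤ X) :
    contK (l ++ [X, 1, l.getLast hne - 1] ++ l.dropLast.reverse)
      = contK l * contK ([1, l.getLast hne - 1] ++ l.dropLast.reverse) * (X + 1) := by
  set c := l.getLast hne with hc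
  set l' := l.dropLast with hl'
  obtain ⟨d, hd⟩ : ∃ d, c = d + 2 := ⟨c - 2, by omega⟩
  have hsplit : l = l' ++ [c] := (List.dropLast_append_getLast hne).symm
  rw [hsplit]
  have hc1 : c - 1 = d + 1 := by omega
  unfold contK
  set A := ((l'.map (fun d => !![d, 1; 1, 0])).prod : Matrix (Fin 2) (Fin 2) ℕ) with hA
  simp only [List.map_append, List.prod_append, List.map_cons, List.map_nil, List.prod_cons,
    List.prod_nil, mul_one, prod_reverse, hd, hc1]
  simp only [Matrix.mul_apply, Fin.sum_univ_two, Matrix.transpose_apply, Matrix.of_apply,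
    Matrix.cons_val', Matrix.cons_val_zero, Matrix.cons_val_one, Matrix.head_cons,
    Matrix.empty_val', Matrix.cons_val_fin_one, Matrix.head_fin_const,
    show d + 2 - 1 = d + 1 from rfl]
  ring
end

section
/- Let q̃ ≥ 2 be an integer. Then for every positive integer n there exists a positive integer a_n coprime to q̃^n such that in the continued fraction expansion a_n/q̃^n = [0; c_1, …, c_s] all partial quotients satisfy c_j ≤ q̃² − 1. -/
open Matrix

/-- continuant pair: `(Kp l).1` is the continuant (denominator),
`(Kp l).2` the numerator of `[0; l]`. -/
def Kp : List ℕ → ℕ × ℕ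
  | [] => (1, 0)
  | a :: l => (a * (Kp l).1 + (Kp l).2, (Kp l).1)

def MQ (a : ℕ) : Matrix (Fin 2) (Fin 2) ℕ := !![a, 1; 1, 0]

def PM (l : List ℕ) : Matrix (Fin 2) (Fin 2) ℕ := (l.map MQ).prod

lemma PM_nil : PM [] = 1 := rfl

lemma PM_cons (a : ℕ) (l : List ℕ) : PM (a :: l) = MQ a * PM l := by
  simp [PM]

lemma PM_append (l₁ l₂ : List ℕ) : PM (l₁ ++ l₂) = PM l₁ * PM l₂ := by
  simp [PM]

lemma MQ_symm (a : ℕ) : (MQ a)ᵀ = MQ a := by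
  ext i j; fin_cases i <;> fin_cases j <;> simp [MQ]

lemma PM_reverse (l : List ℕ) : PM l.reverse = (PM l)ᵀ := by
  rw [PM, PM, Matrix.transpose_list_prod, ← List.map_reverse, ← List.map_reverse]
  congr 1
  rw [List.map_map]
  apply List.map_congr_left
  intro a _
  exact (MQ_symm a).symm

lemma Kp_eq_PM (l : List ℕ) : (Kp l).1 = PM l 0 0 ∧ (Kp l).2 = PM l 1 0 := by
  induction l with
  | nil => constructor <;> rfl
  | cons a l ih =>
      rw [PM_cons]
      constructor
      · simp [Kp, Matrix.mul_apply, Fin.sum_univ_two, MQ, ih.1, ih.2]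
      · simp [Kp, Matrix.mul_apply, Fin.sum_univ_two, MQ, ih.1]

/-- Folding with `t = s+1 ≥ 2`. -/
lemma K1_foldA (v : List ℕ) (b s : ℕ) :
    (Kp (v ++ ([b+1, s, 1, b] ++ v.reverse))).1
      = (s+1) * ((Kp (v ++ [b+1])).1)^2 := by
  rw [(Kp_eq_PM _).1, (Kp_eq_PM _).1, PM_append, PM_append, PM_append, PM_reverse]
  simp [PM_cons, PM_nil, Matrix.mul_apply, Fin.sum_univ_two, MQ, Matrix.vecMul,
    dotProduct, Matrix.transpose_apply]
  ring

/-- Folding with `t = 1`. -/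
lemma K1_foldB (v : List ℕ) (b : ℕ) :
    (Kp (v ++ ([b+2, b] ++ v.reverse))).1 = ((Kp (v ++ [b+1])).1)^2 := by
  rw [(Kp_eq_PM _).1, (Kp_eq_PM _).1, PM_append, PM_append, PM_append, PM_reverse]
  simp [PM_cons, PM_nil, Matrix.mul_apply, Fin.sum_univ_two, MQ, Matrix.vecMul,
    dotProduct, Matrix.transpose_apply]
  ring

lemma K1_pos (l : List ℕ) (h : ∀ x ∈ l, 1 ≤ x) : 1 ≤ (Kp l).1 := by
  induction l with
  | nil => simp [Kp]
  | cons a l ih =>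
      have ha : 1 ≤ a := h a (by simp)
      have := ih (fun x hx => h x (by simp [hx]))
      simp only [Kp]
      nlinarith

lemma K2_pos (l : List ℕ) (hne : l ≠ []) (h : ∀ x ∈ l, 1 ≤ x) : 1 ≤ (Kp l).2 := by
  cases l with
  | nil => exact absurd rfl hne
  | cons a l => simpa [Kp] using K1_pos l (fun x hx => h x (by simp [hx]))

lemma K2_lt_K1 (l : List ℕ) (hne : l ≠ []) (h : ∀ x ∈ l, 1 ≤ x)
    (hlast : 2 ≤ l.getLast!) : (Kp l).2 < (Kp l).1 := by
  cases l with
  | nil => exact absurd rfl hne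
  | cons a l =>
      cases l with
      | nil =>
          have : (([a] : List ℕ)).getLast! = a := rfl
          rw [this] at hlast
          simp [Kp]
          omega
      | cons b m =>
          have h1 : 1 ≤ (Kp (b :: m)).1 := K1_pos _ (fun x hx => h x (by simp [hx]))
          have h2 : 1 ≤ (Kp (b :: m)).2 := K2_pos _ (by simp) (fun x hx => h x (by simp [hx]))
          have ha : 1 ≤ a := h a (by simp)
          show (Kp (b :: m)).1 < a * (Kp (b :: m)).1 + (Kp (b :: m)).2
          nlinarith

lemma K_coprime (l : List ℕ) : Nat.Coprime (Kp l).2 (Kp l).1 := by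
  induction l with
  | nil => simp [Kp, Nat.Coprime]
  | cons a l ih =>
      show Nat.Coprime (Kp l).1 (a * (Kp l).1 + (Kp l).2)
      rw [Nat.add_comm, Nat.mul_comm]
      rw [Nat.coprime_add_mul_left_right]
      exact ih.symm

lemma cfVal_eq (l : List ℕ) (h : ∀ x ∈ l, 1 ≤ x) :
    cfVal l = ((Kp l).2 : ℚ) / ((Kp l).1 : ℚ) := by
  induction l with
  | nil => simp [cfVal, Kp]
  | cons a l ih =>
      have h1 : 1 ≤ (Kp l).1 := K1_pos l (fun x hx => h x (by simp [hx]))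
      have h1q : (0:ℚ) < ((Kp l).1 : ℚ) := by exact_mod_cast h1
      have ha : 1 ≤ a := h a (by simp)
      have haq : (1:ℚ) ≤ (a:ℚ) := by exact_mod_cast ha
      have h2q : (0:ℚ) ≤ ((Kp l).2 : ℚ) := by positivity
      rw [cfVal, ih (fun x hx => h x (by simp [hx]))]
      simp only [Kp]
      have hden : (0:ℚ) < (a:ℚ) * ((Kp l).1:ℚ) + ((Kp l).2:ℚ) := by nlinarith
      push_cast
      rw [eq_div_iff (by positivity)]
      field_simp

lemma getLast!_append_singleton (l : List ℕ) (a : ℕ) : (l ++ [a]).getLast! = a := by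
  induction l with
  | nil => rfl
  | cons x l ih =>
      cases l with
      | nil => rfl
      | cons y m => simpa [List.getLast!, List.getLast] using ih

/-- From a word with bounded partial quotients whose continuant is `q^n`,
we get the conclusion of the theorem. -/
lemma fromWord (q n : ℕ) (hq : 2 ≤ q) (w : List ℕ) (hne : w ≠ [])
    (h1 : ∀ x ∈ w, 1 ≤ x) (h2 : ∀ x ∈ w, x + 1 ≤ q^2)
    (hlast : 2 ≤ w.getLast!) (hK : (Kp w).1 = q^n) :
    ∃ a : ℕ, 0 < a ∧ a < q ^ n ∧ Nat.Coprime a (q ^ n) ∧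
      ∃ c : List ℕ, IsCF a (q ^ n) c ∧ ∀ cj ∈ c, cj ≤ q ^ 2 - 1 := by
  refine ⟨(Kp w).2, K2_pos w hne h1, ?_, ?_, w, ⟨hne, h1, hlast, ?_⟩, ?_⟩
  · rw [← hK]; exact K2_lt_K1 w hne h1 hlast
  · rw [← hK]; exact K_coprime w
  · rw [cfVal_eq w h1, hK]
  · intro cj hcj
    have := h2 cj hcj
    omega

/-- A "good" word for `q^n`: suitable for further folding. -/
def GoodN (q n : ℕ) : Prop :=
  ∃ h u a, 2 ≤ h ∧ h + 2 ≤ q^2 ∧ 2 ≤ a ∧ a + 2 ≤ q^2 ∧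
    (∀ x ∈ u, 1 ≤ x ∧ x + 1 ≤ q^2) ∧ (Kp (h :: (u ++ [a]))).1 = q^n

lemma GoodN.fromWord' {q n : ℕ} (hq : 2 ≤ q) (g : GoodN q n) :
    ∃ a : ℕ, 0 < a ∧ a < q ^ n ∧ Nat.Coprime a (q ^ n) ∧
      ∃ c : List ℕ, IsCF a (q ^ n) c ∧ ∀ cj ∈ c, cj ≤ q ^ 2 - 1 := by
  obtain ⟨h, u, a, hh2, hhq, ha2, haq, hu, hK⟩ := g
  apply fromWord q n hq (h :: (u ++ [a])) (by simp) ?_ ?_ ?_ hK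
  · intro x hx
    simp at hx
    rcases hx with rfl | hx | rfl
    · omega
    · exact (hu x hx).1
    · omega
  · intro x hx
    simp at hx
    rcases hx with rfl | hx | rfl
    · omega
    · exact (hu x hx).2
    · omega
  · have e : (h :: (u ++ [a])) = (h :: u) ++ [a] := by simp
    rw [e, getLast!_append_singleton]
    exact ha2

/-- Folding step: from a good word for `q^m` to good words for
`q^(2m)`, `q^(2m+1)`, `q^(2m+2)`. -/
lemma GoodN.fold {q m : ℕ} (hq : 2 ≤ q) (g : GoodN q m) (k : ℕ) (hk : k ≤ 2) :
    GoodN q (2*m + k) := by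
  obtain ⟨h, u, a, hh2, hhq, ha2, haq, hu, hK⟩ := g
  obtain ⟨b, rfl⟩ : ∃ b, a = b + 1 := ⟨a - 1, by omega⟩
  have hb1 : 1 ≤ b := by omega
  -- the word `h :: u ++ [b+1]` , i.e. `(h :: u) ++ [b+1]`, has continuant `q^m`
  have hK' : (Kp ((h :: u) ++ [b+1])).1 = q^m := by
    rw [show (h :: u) ++ [b+1] = h :: (u ++ [b+1]) by simp]
    exact hK
  -- helper for membership in the new middle list
  have humem : ∀ x ∈ u, 1 ≤ x ∧ x + 1 ≤ q^2 := hu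
  rcases Nat.lt_or_ge k 1 with hk0 | hk1
  · -- k = 0, t = 1 fold
    have hkk : k = 0 := by omega
    subst hkk
    refine ⟨h, u ++ [b+2, b] ++ u.reverse, h, hh2, hhq, hh2, hhq, ?_, ?_⟩
    · intro x hx
      simp only [List.mem_append, List.mem_reverse, List.mem_cons,
        List.mem_singleton, List.not_mem_nil, or_false] at hx
      rcases hx with (hx | rfl | rfl) | hx
      · exact humem x hx
      · omega
      · omega
      · exact humem x hx
    · have e : h :: ((u ++ [b+2, b] ++ u.reverse) ++ [h])
          = (h :: u) ++ ([b+2, b] ++ (h :: u).reverse) := by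
        simp
      rw [e, K1_foldB, hK']
      rw [Nat.add_zero, pow_mul']
  · -- k = 1 or 2 : t = q^k, fold with s = q^k - 1
    have hqk1 : 2 ≤ q^k := by
      calc 2 = 2^1 := rfl
      _ ≤ q^k := Nat.pow_le_pow_left hq k |>.trans' (by
            exact Nat.pow_le_pow_right (by omega) hk1) |>.trans (le_refl _)
    have hqk2 : q^k ≤ q^2 := Nat.pow_le_pow_right (by omega) hk
    obtain ⟨s, hs⟩ : ∃ s, q^k = s + 1 := ⟨q^k - 1, by omega⟩
    refine ⟨h, u ++ [b+1, s, 1, b] ++ u.reverse, h, hh2, hhq, hh2, hhq, ?_, ?_⟩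
    · intro x hx
      simp only [List.mem_append, List.mem_reverse, List.mem_cons,
        List.not_mem_nil, or_false] at hx
      rcases hx with (hx | rfl | rfl | rfl | rfl) | hx
      · exact humem x hx
      · omega
      · omega
      · omega
      · omega
      · exact humem x hx
    · have e : h :: ((u ++ [b+1, s, 1, b] ++ u.reverse) ++ [h])
          = (h :: u) ++ ([b+1, s, 1, b] ++ (h :: u).reverse) := by
        simp
      rw [e, K1_foldA, hK', ← hs, ← pow_mul, ← pow_add]
      congr 1
      omega

lemma good_base2 (c : ℕ) : GoodN (c+3) 2 := by
  have hsq : (c+3)^2 = c^2+6*c+9 := by ring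
  have h0 : 0 ≤ c^2 := Nat.zero_le _
  refine ⟨c+4, [], c+2, by omega, by omega, by omega, by omega, by simp, ?_⟩
  simp [Kp]
  ring

lemma good_base3 (c : ℕ) : GoodN (c+3) 3 := by
  have hsq : (c+3)^2 = c^2+6*c+9 := by ring
  have h0 : 0 ≤ c^2 := Nat.zero_le _
  refine ⟨c+3, [c+2, 1], c+2, by omega, by omega, by omega, by omega, ?_, ?_⟩
  · intro x hx
    simp at hx
    rcases hx with rfl | rfl <;> omega
  · simp [Kp]
    ring

lemma good_base4 (c : ℕ) : GoodN (c+3) 4 := by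
  have hsq : (c+3)^2 = c^2+6*c+9 := by ring
  have h0 : 0 ≤ c^2 := Nat.zero_le _
  refine ⟨c+3, [c^2+6*c+8, 1], c+2, by omega, by omega, by omega, by omega, ?_, ?_⟩
  · intro x hx
    simp at hx
    rcases hx with rfl | rfl <;> omega
  · simp [Kp]
    ring

lemma goodN_all3 (q : ℕ) (hq3 : 3 ≤ q) : ∀ n, 2 ≤ n → GoodN q n := by
  obtain ⟨c, rfl⟩ : ∃ c, q = c + 3 := ⟨q - 3, by omega⟩
  have hq2 : 2 ≤ c + 3 := by omega
  intro n
  induction n using Nat.strong_induction_on with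
  | _ n ih =>
    intro hn
    by_cases h2 : n = 2
    · subst h2; exact good_base2 c
    by_cases h3 : n = 3
    · subst h3; exact good_base3 c
    by_cases h4 : n = 4
    · subst h4; exact good_base4 c
    have hn5 : 5 ≤ n := by omega
    have hrec : GoodN (c+3) (n/2) := ih (n/2) (by omega) (by omega)
    have hne : n = 2*(n/2) + (n % 2) := by omega
    rw [hne]
    exact hrec.fold hq2 (n % 2) (by omega)

lemma good2_3 : GoodN 2 3 :=
  ⟨2, [1], 2, by norm_num, by norm_num, by norm_num, by norm_num,
    by intro x hx; simp at hx; subst hx; norm_num, by decide⟩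

lemma good2_4 : GoodN 2 4 :=
  ⟨2, [3], 2, by norm_num, by norm_num, by norm_num, by norm_num,
    by intro x hx; simp at hx; subst hx; norm_num, by decide⟩

lemma good2_11 : GoodN 2 11 :=
  ⟨2, [2,1,1,3,3,2,1,1], 2, by norm_num, by norm_num, by norm_num, by norm_num,
    by intro x hx; simp at hx; rcases hx with rfl|rfl|rfl|rfl|rfl|rfl|rfl|rfl <;> norm_num,
    by decide⟩

lemma goodN_two : ∀ n, 3 ≤ n → n ≠ 5 → GoodN 2 n := by
  intro n
  induction n using Nat.strong_induction_on with
  | _ n ih =>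
    intro hn hn5
    by_cases h3 : n = 3
    · subst h3; exact good2_3
    by_cases h4 : n = 4
    · subst h4; exact good2_4
    by_cases h11 : n = 11
    · subst h11; exact good2_11
    by_cases hle : n ≤ 10
    · have h6 : 6 ≤ n := by omega
      interval_cases n
      · exact good2_3.fold (by norm_num) 0 (by norm_num)
      · exact good2_3.fold (by norm_num) 1 (by norm_num)
      · exact good2_3.fold (by norm_num) 2 (by norm_num)
      · exact good2_4.fold (by norm_num) 1 (by norm_num)
      · exact good2_4.fold (by norm_num) 2 (by norm_num)
    · have h12 : 12 ≤ n := by omega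
      have hrec : GoodN 2 (n/2) := ih (n/2) (by omega) (by omega) (by omega)
      have hne : n = 2*(n/2) + (n % 2) := by omega
      rw [hne]
      exact hrec.fold (by norm_num) (n % 2) (by omega)

theorem stmt_4 (q : ℕ) (hq : 2 ≤ q) (n : ℕ) (hn : 1 ≤ n) :
    ∃ a : ℕ, 0 < a ∧ a < q ^ n ∧ Nat.Coprime a (q ^ n) ∧
      ∃ c : List ℕ, IsCF a (q ^ n) c ∧ ∀ cj ∈ c, cj ≤ q ^ 2 - 1 := by
  by_cases h1 : n = 1
  · subst h1
    apply fromWord q 1 hq [q] (by simp) ?_ ?_ ?_ ?_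
    · intro x hx; simp at hx; omega
    · have hsq : q^2 = q*q := by ring
      have h2q : 2*q ≤ q*q := Nat.mul_le_mul_right q hq
      intro x hx; simp at hx; subst hx; omega
    · show 2 ≤ q
      exact hq
    · simp [Kp]
  by_cases h2 : n = 2
  · subst h2
    obtain ⟨c, rfl⟩ : ∃ c, q = c + 2 := ⟨q - 2, by omega⟩
    apply fromWord (c+2) 2 hq [1, c^2+4*c+3] (by simp) ?_ ?_ ?_ ?_
    · intro x hx; simp at hx; rcases hx with rfl | rfl <;> omega
    · have hsq : (c+2)^2 = c^2+4*c+4 := by ring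
      intro x hx; simp at hx; rcases hx with rfl | rfl <;> omega
    · show 2 ≤ c^2+4*c+3
      omega
    · simp [Kp]
      ring
  have hn3 : 3 ≤ n := by omega
  by_cases hq2 : q = 2
  · subst hq2
    by_cases hn5 : n = 5
    · subst hn5
      apply fromWord 2 5 (by norm_num) [1,3,1,1,3] (by simp) ?_ ?_ ?_ ?_
      · decide
      · decide
      · decide
      · decide
    · exact (goodN_two n hn3 hn5).fromWord' (by norm_num)
  · have hq3 : 3 ≤ q := by omega
    exact (goodN_all3 q hq3 n (by omega)).fromWord' hq
end

section
/- The matrices u = [[1, 2], [0, 1]] and v = [[1, 0], [2, 1]] generate a free subgroup of SL_2(ℤ) of rank 2. -/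
/-- The matrix `u = [[1,2],[0,1]]` as an element of `SL₂(ℤ)`. -/
def uMat : Matrix.SpecialLinearGroup (Fin 2) ℤ :=
  ⟨!![1, 2; 0, 1], by norm_num [Matrix.det_fin_two_of]⟩

/-- The matrix `v = [[1,0],[2,1]]` as an element of `SL₂(ℤ)`. -/
def vMat : Matrix.SpecialLinearGroup (Fin 2) ℤ :=
  ⟨!![1, 0; 2, 1], by norm_num [Matrix.det_fin_two_of]⟩

namespace Sanov

/-- The matrix attached to a letter of the free group. -/
def F : Fin 2 × Bool → Matrix (Fin 2) (Fin 2) ℤ := fun p =>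
  if p.1 = 0 then (if p.2 then !![1,2;0,1] else !![1,-2;0,1])
  else (if p.2 then !![1,0;2,1] else !![1,0;-2,1])

def eps (b : Bool) : ℤ := if b then 1 else -1

/-- The ping-pong invariant. -/
def P : Fin 2 × Bool → (Fin 2 → ℤ) → Prop := fun p v =>
  if p.1 = 0 then
    (0 < v 1 ∧ v 1 < eps p.2 * v 0) ∨ (v 1 < 0 ∧ eps p.2 * v 0 < v 1)
  else
    (0 < v 0 ∧ v 0 < eps p.2 * v 1) ∨ (v 0 < 0 ∧ eps p.2 * v 1 < v 0)

def start : Fin 2 × Bool → (Fin 2 → ℤ) := fun p =>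
  if p.1 = 0 then ![0, 1] else ![1, 0]

lemma mulVec_F (p : Fin 2 × Bool) (w : Fin 2 → ℤ) :
    (F p).mulVec w = if p.1 = 0 then ![w 0 + 2 * eps p.2 * w 1, w 1]
      else ![w 0, w 1 + 2 * eps p.2 * w 0] := by
  obtain ⟨i, b⟩ := p
  fin_cases i <;> cases b <;>
    simp [F, eps, Matrix.mulVec, dotProduct, Fin.sum_univ_two] <;>
    ring

def Rel : Fin 2 × Bool → Fin 2 × Bool → Prop := fun a b => a.1 ≠ b.1 ∨ a = b

lemma step {a b : Fin 2 × Bool} {w : Fin 2 → ℤ} (hr : Rel a b) (h : P b w) :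
    P a ((F a).mulVec w) := by
  rw [mulVec_F]
  obtain ⟨i, s⟩ := a
  obtain ⟨j, t⟩ := b
  simp only [Rel, P] at *
  fin_cases i <;> fin_cases j <;> cases s <;> cases t <;>
    simp_all [eps] <;> omega

lemma base (p : Fin 2 × Bool) : P p ((F p).mulVec (start p)) := by
  rw [mulVec_F]
  obtain ⟨i, s⟩ := p
  fin_cases i <;> cases s <;> simp [P, eps, start]

lemma not_P_start (p q : Fin 2 × Bool) : ¬ P p (start q) := by
  obtain ⟨i, s⟩ := p; obtain ⟨j, t⟩ := q
  fin_cases i <;> fin_cases j <;> cases s <;> simp [P, eps, start]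

lemma key : ∀ L : List (Fin 2 × Bool), List.Chain' Rel L →
    ∀ a ∈ L.head?, ∀ z ∈ L.getLast?,
      P a (((L.map F).prod).mulVec (start z)) := by
  intro L
  induction L with
  | nil => simp
  | cons a L ih =>
    intro hc x hx z hz
    simp only [List.head?_cons, Option.mem_def, Option.some.injEq] at hx
    subst hx
    cases L with
    | nil =>
      simp only [List.getLast?_singleton, Option.mem_def, Option.some.injEq] at hz
      subst hz
      simpa using base a
    | cons b M =>
      rw [List.getLast?_cons_cons] at hz
      have hrel : Rel a b := hc.rel_head
      have hP := ih hc.tail b (by simp) z hz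
      have hprod : ((a :: b :: M).map F).prod = F a * ((b :: M).map F).prod := by simp
      rw [hprod, ← Matrix.mulVec_mulVec]
      exact step hrel hP

lemma chain_aux : ∀ L : List (Fin 2 × Bool),
    (∀ (l1 : List (Fin 2 × Bool)) (x : Fin 2) (b : Bool) (l2 : List (Fin 2 × Bool)),
      L ≠ l1 ++ (x, b) :: (x, !b) :: l2) → List.Chain' Rel L := by
  intro L
  induction L with
  | nil => intro _; exact List.IsChain.nil
  | cons a M ih =>
    intro h
    cases M with
    | nil => exact List.IsChain.singleton _
    | cons b M' =>
      refine List.IsChain.cons_cons ?_ (ih fun l1 x c l2 hh => h (a :: l1) x c l2 (by simp [hh]))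
      by_cases h1 : a.1 = b.1
      · right
        by_contra hne
        have h2 : a.2 = !b.2 := by
          cases ha : a.2 <;> cases hb : b.2 <;> simp_all [Prod.ext_iff]
        have hb : b = (a.1, !a.2) := Prod.ext h1.symm (by simp [h2])
        exact h [] a.1 a.2 M' (by simp [← hb])
      · exact Or.inl h1

lemma chain_toWord (w : FreeGroup (Fin 2)) : List.Chain' Rel w.toWord := by
  apply chain_aux
  intro l1 x b l2 h
  have := FreeGroup.reduce_toWord w
  rw [h] at this
  exact FreeGroup.reduce.not this

lemma coe_lift (f : Fin 2 → Matrix.SpecialLinearGroup (Fin 2) ℤ)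
    (hf : ∀ p : Fin 2 × Bool, ((if p.2 then f p.1 else (f p.1)⁻¹ :
        Matrix.SpecialLinearGroup (Fin 2) ℤ) : Matrix (Fin 2) (Fin 2) ℤ) = F p) :
    ∀ L : List (Fin 2 × Bool),
      ((FreeGroup.lift f (FreeGroup.mk L) : Matrix.SpecialLinearGroup (Fin 2) ℤ) :
        Matrix (Fin 2) (Fin 2) ℤ) = (L.map F).prod := by
  intro L
  rw [FreeGroup.lift_mk]
  induction L with
  | nil => simp
  | cons p M ih =>
    simp only [List.map_cons, List.prod_cons, Matrix.SpecialLinearGroup.coe_mul, ih]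
    congr 1
    rw [← hf p]
    cases p.2 <;> simp

end Sanov

/-- `u` and `v` generate a free subgroup of `SL₂(ℤ)` of rank `2`: the
homomorphism from the free group on two generators sending the generators to
`u` and `v` is injective (no nontrivial reduced word equals the identity). -/
theorem stmt_6 :
    Function.Injective (FreeGroup.lift (fun i : Fin 2 => if i = 0 then uMat else vMat)) := by
  rw [injective_iff_map_eq_one]
  intro w hw
  by_contra hne
  set f : Fin 2 → Matrix.SpecialLinearGroup (Fin 2) ℤ :=
    fun i => if i = 0 then uMat else vMat with hfdef
  have hf : ∀ p : Fin 2 × Bool, ((if p.2 then f p.1 else (f p.1)⁻¹ :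
      Matrix.SpecialLinearGroup (Fin 2) ℤ) : Matrix (Fin 2) (Fin 2) ℤ) = Sanov.F p := by
    rintro ⟨i, b⟩
    fin_cases i <;> cases b <;>
      simp [hfdef, Sanov.F, Matrix.SpecialLinearGroup.coe_inv,
        Matrix.adjugate_fin_two] <;> simp [uMat, vMat, Matrix.adjugate_fin_two]
  -- the word is nonempty
  have hL : w.toWord ≠ [] := fun h =>
    hne (by rw [← FreeGroup.mk_toWord (x := w), h]; rfl)
  obtain ⟨a, M, hM⟩ := List.exists_cons_of_ne_nil hL
  have hc := Sanov.chain_toWord w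
  have hkey := Sanov.key w.toWord hc a (by rw [hM]; simp)
    (w.toWord.getLast hL) (by rw [List.getLast?_eq_getLast hL]; rfl)
  have hprod : ((w.toWord.map Sanov.F).prod) = 1 := by
    rw [← Sanov.coe_lift f hf w.toWord, FreeGroup.mk_toWord, hw,
      Matrix.SpecialLinearGroup.coe_one]
  rw [hprod, Matrix.one_mulVec] at hkey
  exact Sanov.not_P_start _ _ hkey
end

section
/- For each positive integer j let g_j = v^j u^{-j} where u = [[1,2],[0,1]] and v = [[1,0],[2,1]]. Then g_j = [[1, −2j], [2j, 1 − 4j²]], and for any N ≥ 1 the set {g_1, …, g_N} generates a free subgroup of SL_2(ℤ) of rank N. -/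
/-- `g_j = v^j u^{-j}`. -/
def gMat (j : ℕ) : Matrix.SpecialLinearGroup (Fin 2) ℤ := vMat ^ j * uMat⁻¹ ^ j

open Matrix Pointwise

abbrev SL2Z := Matrix.SpecialLinearGroup (Fin 2) ℤ

lemma vMat_pow_coe (j : ℕ) :
    ((vMat ^ j : SL2Z) : Matrix (Fin 2) (Fin 2) ℤ) = !![1, 0; 2 * (j : ℤ), 1] := by
  induction j with
  | zero => simp [Matrix.one_fin_two]
  | succ n ih =>
    rw [pow_succ, Matrix.SpecialLinearGroup.coe_mul, ih]
    show _ * (vMat : Matrix (Fin 2) (Fin 2) ℤ) = _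
    rw [show (vMat : Matrix (Fin 2) (Fin 2) ℤ) = !![1, 0; 2, 1] from rfl]
    rw [Matrix.mul_fin_two]
    push_cast
    congr 1 <;> ring

lemma uMat_inv_coe :
    ((uMat⁻¹ : SL2Z) : Matrix (Fin 2) (Fin 2) ℤ) = !![1, -2; 0, 1] := by
  rw [Matrix.SpecialLinearGroup.coe_inv,
    show (uMat : Matrix (Fin 2) (Fin 2) ℤ) = !![1, 2; 0, 1] from rfl,
    Matrix.adjugate_fin_two]
  norm_num

lemma uMat_inv_pow_coe (j : ℕ) :
    ((uMat⁻¹ ^ j : SL2Z) : Matrix (Fin 2) (Fin 2) ℤ) = !![1, -2 * (j : ℤ); 0, 1] := by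
  induction j with
  | zero => simp [Matrix.one_fin_two]
  | succ n ih =>
    rw [pow_succ, Matrix.SpecialLinearGroup.coe_mul, ih, uMat_inv_coe, Matrix.mul_fin_two]
    push_cast
    congr 1 <;> ring

lemma gMat_coe (j : ℕ) :
    (gMat j : Matrix (Fin 2) (Fin 2) ℤ)
      = !![1, -2 * (j : ℤ); 2 * (j : ℤ), 1 - 4 * (j : ℤ) ^ 2] := by
  rw [gMat, Matrix.SpecialLinearGroup.coe_mul, vMat_pow_coe, uMat_inv_pow_coe,
    Matrix.mul_fin_two]
  congr 1 <;> ring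

lemma gMat_inv_coe (j : ℕ) :
    (((gMat j)⁻¹ : SL2Z) : Matrix (Fin 2) (Fin 2) ℤ)
      = !![1 - 4 * (j : ℤ) ^ 2, 2 * (j : ℤ); -(2 * (j : ℤ)), 1] := by
  rw [Matrix.SpecialLinearGroup.coe_inv, gMat_coe, Matrix.adjugate_fin_two]
  norm_num

/-- Nonzero integer vectors, the space on which we play ping-pong. -/
def PV : Type := {v : Fin 2 → ℤ // v ≠ 0}

lemma SL2Z_mulVec_ne_zero (g : SL2Z) {v : Fin 2 → ℤ} (hv : v ≠ 0) :
    (g : Matrix (Fin 2) (Fin 2) ℤ).mulVec v ≠ 0 := by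
  intro h
  apply hv
  have : ((g⁻¹ : SL2Z) : Matrix (Fin 2) (Fin 2) ℤ).mulVec
      (((g : SL2Z) : Matrix (Fin 2) (Fin 2) ℤ).mulVec v) = 0 := by
    rw [h, Matrix.mulVec_zero]
  rwa [Matrix.mulVec_mulVec, ← Matrix.SpecialLinearGroup.coe_mul, inv_mul_cancel,
    Matrix.SpecialLinearGroup.coe_one, Matrix.one_mulVec] at this

instance : SMul SL2Z PV :=
  ⟨fun g v => ⟨(g : Matrix (Fin 2) (Fin 2) ℤ).mulVec v.1, SL2Z_mulVec_ne_zero g v.2⟩⟩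

lemma PV_smul_coe (g : SL2Z) (v : PV) :
    (g • v).1 = (g : Matrix (Fin 2) (Fin 2) ℤ).mulVec v.1 := rfl

instance : MulAction SL2Z PV where
  one_smul v := by
    apply Subtype.ext
    rw [PV_smul_coe, Matrix.SpecialLinearGroup.coe_one, Matrix.one_mulVec]
  mul_smul g h v := by
    apply Subtype.ext
    rw [PV_smul_coe, PV_smul_coe, PV_smul_coe, Matrix.mulVec_mulVec,
      Matrix.SpecialLinearGroup.coe_mul]

/-- `X_j`: vectors whose slope `y/x` lies in `[2j-1, 2j+1)`. -/
def Xset (j : ℕ) : Set PV :=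
  {v | 0 ≤ v.1 0 * (v.1 1 - (2 * (j : ℤ) - 1) * v.1 0) ∧
       v.1 0 * (v.1 1 - (2 * (j : ℤ) + 1) * v.1 0) < 0}

/-- `Y_j`: vectors whose inverse slope `x/y` lies in `(2j-1, 2j+1]`. -/
def Yset (j : ℕ) : Set PV :=
  {v | 0 < v.1 1 * (v.1 0 - (2 * (j : ℤ) - 1) * v.1 1) ∧
       v.1 1 * (v.1 0 - (2 * (j : ℤ) + 1) * v.1 1) ≤ 0}

section Arith

lemma hX_aux (k x y : ℤ) (hv : ¬(x = 0 ∧ y = 0))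
    (h : ¬(0 < y * (x - (2 * k - 1) * y) ∧ y * (x - (2 * k + 1) * y) ≤ 0)) :
    0 ≤ (x - 2 * k * y) * (x - (2 * k - 1) * y) ∧
      0 < (x - 2 * k * y) * (x - (2 * k + 1) * y) := by
  by_cases hy : y = 0
  · subst hy
    have hx : x ≠ 0 := fun hx => hv ⟨hx, rfl⟩
    constructor
    · nlinarith [sq_nonneg x]
    · nlinarith [sq_pos_of_ne_zero hx]
  · push_neg at h
    have hy2 : 0 < y ^ 2 := by positivity
    rcases le_or_gt (y * (x - (2 * k - 1) * y)) 0 with h1 | h1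
    · have hb : y * (x - 2 * k * y) < 0 := by nlinarith
      have hc : y * (x - (2 * k + 1) * y) < 0 := by nlinarith
      constructor
      · nlinarith [mul_nonneg (neg_nonneg.2 h1) (neg_nonneg.2 hb.le)]
      · nlinarith [mul_pos (neg_pos.2 hb) (neg_pos.2 hc)]
    · have h2 := h h1
      have hb : 0 < y * (x - 2 * k * y) := by nlinarith
      constructor
      · nlinarith [mul_pos h1 hb]
      · nlinarith [mul_pos hb h2]

lemma hY_aux (k x y : ℤ) (hv : ¬(x = 0 ∧ y = 0))
    (h : ¬(0 ≤ x * (y - (2 * k - 1) * x) ∧ x * (y - (2 * k + 1) * x) < 0)) :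
    0 < (y - 2 * k * x) * (y - (2 * k - 1) * x) ∧
      0 ≤ (y - 2 * k * x) * (y - (2 * k + 1) * x) := by
  by_cases hx : x = 0
  · subst hx
    have hy : y ≠ 0 := fun hy => hv ⟨rfl, hy⟩
    constructor
    · nlinarith [sq_pos_of_ne_zero hy]
    · nlinarith [sq_nonneg y]
  · push_neg at h
    have hx2 : 0 < x ^ 2 := by positivity
    rcases lt_or_ge (x * (y - (2 * k - 1) * x)) 0 with h1 | h1
    · have hb : x * (y - 2 * k * x) < 0 := by nlinarith
      have hc : x * (y - (2 * k + 1) * x) < 0 := by nlinarith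
      constructor
      · nlinarith [mul_pos (neg_pos.2 hb) (neg_pos.2 h1)]
      · nlinarith [mul_pos (neg_pos.2 hb) (neg_pos.2 hc)]
    · have h2 := h h1
      have hb : 0 < x * (y - 2 * k * x) := by nlinarith
      have ha : 0 < x * (y - (2 * k - 1) * x) := by nlinarith
      constructor
      · nlinarith [mul_pos hb ha]
      · nlinarith [mul_nonneg hb.le h2]

lemma Xdisj_aux (i j x y : ℤ) (hij : i < j)
    (h2 : x * (y - (2 * i + 1) * x) < 0)
    (h3 : 0 ≤ x * (y - (2 * j - 1) * x)) : False := by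
  nlinarith [mul_nonneg (by linarith : (0 : ℤ) ≤ 2 * j - 2 * i - 2) (sq_nonneg x)]

lemma Ydisj_aux (i j x y : ℤ) (hij : i < j)
    (h2 : y * (x - (2 * i + 1) * y) ≤ 0)
    (h3 : 0 < y * (x - (2 * j - 1) * y)) : False := by
  nlinarith [mul_nonneg (by linarith : (0 : ℤ) ≤ 2 * j - 2 * i - 2) (sq_nonneg y)]

lemma XYdisj_aux (i j x y : ℤ) (hi : 1 ≤ i) (hj : 1 ≤ j)
    (h1 : 0 ≤ x * (y - (2 * i - 1) * x))
    (h3 : 0 < y * (x - (2 * j - 1) * y)) : False := by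
  nlinarith [sq_nonneg (x - y),
    mul_nonneg (by linarith : (0 : ℤ) ≤ 2 * i - 2) (sq_nonneg x),
    mul_nonneg (by linarith : (0 : ℤ) ≤ 2 * j - 2) (sq_nonneg y)]

end Arith

lemma smul_coords (j : ℕ) (w : PV) :
    (gMat j • w).1 0 = w.1 0 - 2 * (j : ℤ) * w.1 1 ∧
    (gMat j • w).1 1 = 2 * (j : ℤ) * w.1 0 + (1 - 4 * (j : ℤ) ^ 2) * w.1 1 := by
  have h : (gMat j • w).1 = (gMat j : Matrix (Fin 2) (Fin 2) ℤ).mulVec w.1 := rfl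
  rw [gMat_coe] at h
  constructor <;> rw [h] <;>
    simp [Matrix.mulVec, dotProduct, Fin.sum_univ_two] <;> ring

lemma smul_inv_coords (j : ℕ) (w : PV) :
    ((gMat j)⁻¹ • w).1 0 = (1 - 4 * (j : ℤ) ^ 2) * w.1 0 + 2 * (j : ℤ) * w.1 1 ∧
    ((gMat j)⁻¹ • w).1 1 = w.1 1 - 2 * (j : ℤ) * w.1 0 := by
  have h : ((gMat j)⁻¹ • w).1 = ((gMat j)⁻¹ : SL2Z).1.mulVec w.1 := rfl
  rw [gMat_inv_coe] at h
  constructor <;> rw [h] <;>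
    simp [Matrix.mulVec, dotProduct, Fin.sum_univ_two] <;> ring

lemma pv_ne (w : PV) : ¬(w.1 0 = 0 ∧ w.1 1 = 0) := by
  rintro ⟨h0, h1⟩
  apply w.2
  funext i
  fin_cases i <;> assumption

lemma injNat : Function.Injective ⇑(FreeGroup.lift (fun n : ℕ => gMat (n + 1))) := by
  apply FreeGroup.injective_lift_of_ping_pong _ (fun n => Xset (n + 1)) (fun n => Yset (n + 1))
  · -- nonempty
    intro n
    refine ⟨⟨![1, 2 * ((n : ℤ) + 1)], ?_⟩, ?_, ?_⟩
    · intro h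
      have := congrFun h 0
      simp at this
    · show (0:ℤ) ≤ 1 * (2 * ((n : ℤ) + 1) - (2 * ((n:ℕ)+1 : ℕ) - 1) * 1)
      push_cast
      nlinarith [sq_nonneg ((n : ℤ) + 1)]
    · show (1:ℤ) * (2 * ((n : ℤ) + 1) - (2 * ((n:ℕ)+1 : ℕ) + 1) * 1) < 0
      push_cast
      nlinarith [sq_nonneg ((n : ℤ) + 1)]
  · -- X pairwise disjoint
    intro n m hnm
    rw [Function.onFun, Set.disjoint_left]
    rintro v ⟨hn1, hn2⟩ ⟨hm1, hm2⟩
    rcases hnm.lt_or_gt with h | h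
    · exact Xdisj_aux (n + 1 : ℕ) (m + 1 : ℕ) _ _ (by exact_mod_cast Nat.succ_lt_succ h) hn2 hm1
    · exact Xdisj_aux (m + 1 : ℕ) (n + 1 : ℕ) _ _ (by exact_mod_cast Nat.succ_lt_succ h) hm2 hn1
  · -- Y pairwise disjoint
    intro n m hnm
    rw [Function.onFun, Set.disjoint_left]
    rintro v ⟨hn1, hn2⟩ ⟨hm1, hm2⟩
    rcases hnm.lt_or_gt with h | h
    · exact Ydisj_aux (n + 1 : ℕ) (m + 1 : ℕ) _ _ (by exact_mod_cast Nat.succ_lt_succ h) hn2 hm1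
    · exact Ydisj_aux (m + 1 : ℕ) (n + 1 : ℕ) _ _ (by exact_mod_cast Nat.succ_lt_succ h) hm2 hn1
  · -- X and Y disjoint
    intro n m
    rw [Set.disjoint_left]
    rintro v ⟨hn1, _⟩ ⟨hm1, _⟩
    exact XYdisj_aux (n + 1 : ℕ) (m + 1 : ℕ) _ _ (by exact_mod_cast Nat.succ_le_succ (Nat.zero_le n)) (by exact_mod_cast Nat.succ_le_succ (Nat.zero_le m)) hn1 hm1
  · -- ping : g_j • (Y j)ᶜ ⊆ X j
    intro n
    rintro z ⟨w, hw, rfl⟩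
    show gMat (n + 1) • w ∈ Xset (n + 1)
    obtain ⟨e0, e1⟩ := smul_coords (n + 1) w
    have key := hX_aux ((n + 1 : ℕ) : ℤ) (w.1 0) (w.1 1) (pv_ne w) hw
    simp only [Xset, Set.mem_setOf_eq, e0, e1]
    constructor
    · nlinarith [key.1]
    · nlinarith [key.2]
  · -- pong : g_j⁻¹ • (X j)ᶜ ⊆ Y j
    intro n
    rintro z ⟨w, hw, rfl⟩
    show (gMat (n + 1))⁻¹ • w ∈ Yset (n + 1)
    obtain ⟨e0, e1⟩ := smul_inv_coords (n + 1) w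
    have key := hY_aux ((n + 1 : ℕ) : ℤ) (w.1 0) (w.1 1) (pv_ne w) hw
    simp only [Yset, Set.mem_setOf_eq, e0, e1]
    constructor
    · nlinarith [key.1]
    · nlinarith [key.2]

/-- `g_j = [[1, -2j],[2j, 1-4j²]]`, and for any `N ≥ 1` the matrices
`g_1, …, g_N` generate a free subgroup of `SL₂(ℤ)` of rank `N`: the
homomorphism from the free group on `N` generators sending the `i`-th
generator to `g_{i+1}` is injective. -/
theorem stmt_7 (N : ℕ) (hN : 1 ≤ N) :
    (∀ j : ℕ, 1 ≤ j →
      (gMat j : Matrix (Fin 2) (Fin 2) ℤ)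
        = !![1, -2 * (j : ℤ); 2 * (j : ℤ), 1 - 4 * (j : ℤ) ^ 2]) ∧
    Function.Injective (FreeGroup.lift (fun i : Fin N => gMat (i + 1))) := by
  constructor
  · intro j _
    exact gMat_coe j
  · have hmap : Function.Injective (FreeGroup.map (Fin.val : Fin N → ℕ)) := by
      have hli : Function.LeftInverse (FreeGroup.map (fun m : ℕ => if h : m < N then (⟨m, h⟩ : Fin N) else ⟨0, hN⟩)) (FreeGroup.map (Fin.val : Fin N → ℕ)) := by
        intro x
        rw [FreeGroup.map.comp]
        have : ((fun m : ℕ => if h : m < N then (⟨m, h⟩ : Fin N) else ⟨0, hN⟩) ∘ Fin.val)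
            = id := by
          funext i
          simp [i.isLt]
        rw [this, FreeGroup.map.id]
      exact hli.injective
    have hcomp : (FreeGroup.lift (fun i : Fin N => gMat (i + 1)))
        = (FreeGroup.lift (fun n : ℕ => gMat (n + 1))).comp
            (FreeGroup.map (Fin.val : Fin N → ℕ)) := by
      apply FreeGroup.ext_hom
      intro a
      simp
    rw [hcomp]
    exact injNat.comp hmap
end

section
/- Let p be an odd prime, n ≥ 1, and g ∈ SL_2(ℤ/p^nℤ) with parameter r = r(g) defined via g = (Tr(g)/2)·I + p^r·g', where g' = [[a,b],[c,−a]] has not all entries divisible by p. Then the centralizer (stabilizer under conjugation) of g in SL_2(ℤ/p^nℤ) has size at most 8·p^{n+2r}. -/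
-- helper lemmas, first tests
section
variable {p n : ℕ}

lemma aux_dvd_iff (hp : p.Prime) (hn : 1 ≤ n) (x : ZMod (p^n)) :
    (p : ZMod (p^n)) ∣ x ↔ p ∣ x.val := by
  haveI : NeZero (p^n) := ⟨pow_ne_zero n hp.pos.ne'⟩
  constructor
  · rintro ⟨k, rfl⟩
    have hk : ((p : ZMod (p^n)) * k) = (((p * k.val : ℕ)) : ZMod (p^n)) := by
      push_cast [ZMod.natCast_zmod_val]; ring
    rw [hk, ZMod.val_natCast]
    exact (Nat.dvd_mod_iff (dvd_pow_self p (by omega))).mpr ⟨k.val, rfl⟩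
  · rintro ⟨m, hm⟩
    refine ⟨(m : ZMod (p^n)), ?_⟩
    rw [← ZMod.natCast_zmod_val x, hm]; push_cast; ring

lemma aux_isUnit_iff (hp : p.Prime) (hn : 1 ≤ n) (x : ZMod (p^n)) :
    IsUnit x ↔ ¬ (p : ZMod (p^n)) ∣ x := by
  haveI : NeZero (p^n) := ⟨pow_ne_zero n hp.pos.ne'⟩
  constructor
  · rintro hu ⟨k, rfl⟩
    have hpu : IsUnit ((p : ℕ) : ZMod (p^n)) := isUnit_of_mul_isUnit_left hu
    have hco := (ZMod.isUnit_iff_coprime p (p^n)).mp hpu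
    exact hp.one_lt.ne' (Nat.Coprime.eq_one_of_dvd hco (dvd_pow_self p (by omega)))
  · intro hnd
    have hv : ¬ p ∣ x.val := fun h => hnd ((aux_dvd_iff hp hn x).mpr h)
    have hc : Nat.Coprime x.val (p^n) :=
      Nat.Coprime.pow_right n ((Nat.Prime.coprime_iff_not_dvd hp).mpr hv).symm
    rw [← ZMod.natCast_zmod_val x]
    exact (ZMod.isUnit_iff_coprime _ _).mpr hc
end

section
variable {p n : ℕ}

lemma aux_p_not_unit (hp : p.Prime) (hn : 1 ≤ n) :
    ¬ IsUnit ((p : ℕ) : ZMod (p^n)) := by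
  intro hpu
  have hco := (ZMod.isUnit_iff_coprime p (p^n)).mp hpu
  exact hp.one_lt.ne' (Nat.Coprime.eq_one_of_dvd hco (dvd_pow_self p (by omega)))

lemma aux_local (hp : p.Prime) (hn : 1 ≤ n) (x y : ZMod (p^n))
    (hxy : x * y = 0) (hu : IsUnit (x + y)) : x = 0 ∨ y = 0 := by
  by_cases hx : IsUnit x
  · exact Or.inr (by rwa [hx.mul_right_eq_zero] at hxy)
  by_cases hy : IsUnit y
  · exact Or.inl (by rwa [hy.mul_left_eq_zero] at hxy)
  exfalso
  obtain ⟨k, hk⟩ := not_not.mp fun h => hx ((aux_isUnit_iff hp hn x).mpr h)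
  obtain ⟨l, hl⟩ := not_not.mp fun h => hy ((aux_isUnit_iff hp hn y).mpr h)
  rw [hk, hl, ← mul_add] at hu
  exact aux_p_not_unit hp hn (isUnit_of_mul_isUnit_left hu)

lemma aux_sq_one (hp : p.Prime) (hodd : Odd p) (hn : 1 ≤ n) (s : ZMod (p^n))
    (hs : s ^ 2 = 1) : s = 1 ∨ s = -1 := by
  haveI : NeZero (p^n) := ⟨pow_ne_zero n hp.pos.ne'⟩
  have hsu : IsUnit s := IsUnit.of_mul_eq_one s (by rw [← sq, hs])
  have h2 : IsUnit (2 : ZMod (p^n)) := by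
    have : IsUnit ((2 : ℕ) : ZMod (p^n)) :=
      (ZMod.isUnit_iff_coprime 2 (p^n)).mpr (Nat.coprime_two_left.mpr (hodd.pow))
    simpa using this
  have hmul : (s - 1) * (s + 1) = 0 := by ring_nf; rw [hs]; ring
  have hadd : IsUnit ((s - 1) + (s + 1)) := by
    have : (s - 1) + (s + 1) = 2 * s := by ring
    rw [this]; exact h2.mul hsu
  rcases aux_local hp hn _ _ hmul hadd with h | h
  · exact Or.inl (by linear_combination h)
  · exact Or.inr (by linear_combination h)

lemma aux_ann_card (hp : p.Prime) (hn : 1 ≤ n) [NeZero (p^n)] (r : ℕ) :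
    (Finset.univ.filter
      (fun v : ZMod (p^n) => (p : ZMod (p^n))^r * v = 0)).card ≤ p^r := by
  by_cases hrn : n ≤ r
  · calc (Finset.univ.filter
        (fun v : ZMod (p^n) => (p : ZMod (p^n))^r * v = 0)).card
        ≤ (Finset.univ : Finset (ZMod (p^n))).card := Finset.card_filter_le _ _
      _ = p^n := by rw [Finset.card_univ, ZMod.card]
      _ ≤ p^r := Nat.pow_le_pow_right hp.pos hrn
  · push_neg at hrn
    have hdvd : ∀ v : ZMod (p^n), (p : ZMod (p^n))^r * v = 0 → p^(n-r) ∣ v.val := by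
      intro v hv
      have h0 : (((p^r * v.val : ℕ)) : ZMod (p^n)) = 0 := by
        push_cast [ZMod.natCast_zmod_val]; exact hv
      have hd := (ZMod.natCast_eq_zero_iff _ _).mp h0
      obtain ⟨k, hk⟩ := hd
      have hk' : p^r * v.val = p^r * (p^(n-r) * k) := by
        rw [hk, ← mul_assoc, ← pow_add]; congr 2; omega
      exact ⟨k, Nat.eq_of_mul_eq_mul_left (pow_pos hp.pos r) hk'⟩
    refine (Finset.card_le_card_of_injOn (fun v => v.val / p^(n-r))
      ?_ ?_).trans (le_of_eq (Finset.card_range _))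
    · intro v hv
      rw [Finset.mem_coe, Finset.mem_range]
      have hvlt : v.val < p^(n-r) * p^r := by
        rw [← pow_add, show n-r+r = n by omega]; exact ZMod.val_lt v
      exact Nat.div_lt_of_lt_mul hvlt
    · intro v1 h1 v2 h2 hdiv
      simp only [Finset.coe_filter, Set.mem_setOf_eq] at h1 h2
      have d1 := hdvd v1 h1.2
      have d2 := hdvd v2 h2.2
      apply ZMod.val_injective
      calc v1.val = p^(n-r) * (v1.val / p^(n-r)) := (Nat.mul_div_cancel' d1).symm
        _ = p^(n-r) * (v2.val / p^(n-r)) := by rw [show v1.val / p^(n-r) = v2.val / p^(n-r) from hdiv]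
        _ = v2.val := Nat.mul_div_cancel' d2
end


lemma aux_comm_card {p n : ℕ} (hp : p.Prime) (hodd : Odd p) (hn : 1 ≤ n)
    [NeZero (p^n)] (a b c : ZMod (p^n)) (r : ℕ)
    (hnv : ¬ (((p : ZMod (p^n)) ∣ a) ∧ ((p : ZMod (p^n)) ∣ b) ∧
      ((p : ZMod (p^n)) ∣ c)))
    (annbd : (Finset.univ.filter
      (fun v : ZMod (p^n) => (p : ZMod (p^n))^r * v = 0)).card ≤ p^r)
    (unit_iff : ∀ x : ZMod (p^n), IsUnit x ↔ ¬ (p : ZMod (p^n)) ∣ x)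
    (two_unit : IsUnit (2 : ZMod (p^n))) :
    (Finset.univ.filter (fun H : Matrix (Fin 2) (Fin 2) (ZMod (p^n)) =>
        (p : ZMod (p^n))^r • (H * !![a,b;c,-a])
          = (p : ZMod (p^n))^r • (!![a,b;c,-a] * H))).card
      ≤ p^(2*n + 2*r) := by
  classical
  set q : ZMod (p^n) := (p : ZMod (p^n))^r with hq
  set AnnF : Finset (ZMod (p^n)) := Finset.univ.filter (fun v : ZMod (p^n) => q * v = 0) with hAnnF
  set C : Finset (Matrix (Fin 2) (Fin 2) (ZMod (p^n))) :=
    Finset.univ.filter (fun H => q • (H * !![a,b;c,-a]) = q • (!![a,b;c,-a] * H))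
    with hC
  have main : ∀ f₁ f₂ f₃ f₄ : Matrix (Fin 2) (Fin 2) (ZMod (p^n)) → ZMod (p^n),
      (∀ H ∈ C, q * f₃ H = 0) → (∀ H ∈ C, q * f₄ H = 0) →
      (Set.InjOn (fun H => (f₁ H, f₂ H, f₃ H, f₄ H)) ↑C) →
      C.card ≤ p ^ (2*n + 2*r) := by
    intro f₁ f₂ f₃ f₄ h3 h4 hinj
    have step : C.card ≤ ((Finset.univ : Finset (ZMod (p^n))) ×ˢ (Finset.univ : Finset (ZMod (p^n)))
        ×ˢ AnnF ×ˢ AnnF).card := by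
      apply Finset.card_le_card_of_injOn (fun H => (f₁ H, f₂ H, f₃ H, f₄ H))
      · intro H hH
        simp only [Finset.mem_coe, Finset.mem_product, Finset.mem_univ, true_and, hAnnF,
          Finset.mem_filter]
        exact ⟨h3 H hH, h4 H hH⟩
      · exact hinj
    refine step.trans ?_
    rw [Finset.card_product, Finset.card_product, Finset.card_product,
      Finset.card_univ, ZMod.card]
    calc p^n * (p^n * (AnnF.card * AnnF.card))
        ≤ p^n * (p^n * (p^r * p^r)) := by
          exact Nat.mul_le_mul_left _ (Nat.mul_le_mul_left _
            (Nat.mul_le_mul annbd annbd))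
      _ = p^(2*n+2*r) := by rw [show 2*n+2*r = n+(n+(r+r)) by ring, pow_add, pow_add, pow_add]
  -- entry equations
  have entries : ∀ H ∈ C,
      (q * (H 0 0 * a + H 0 1 * c) = q * (a * H 0 0 + b * H 1 0)) ∧
      (q * (H 0 0 * b + H 0 1 * -a) = q * (a * H 0 1 + b * H 1 1)) ∧
      (q * (H 1 0 * a + H 1 1 * c) = q * (c * H 0 0 + -a * H 1 0)) := by
    intro H hH
    rw [hC, Finset.mem_filter] at hH
    have hH' := hH.2
    have e00 := congrFun (congrFun hH' 0) 0
    have e01 := congrFun (congrFun hH' 0) 1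
    have e10 := congrFun (congrFun hH' 1) 0
    simp only [Matrix.mul_apply, Fin.sum_univ_two, Matrix.smul_apply, smul_eq_mul,
      Matrix.vecMul, dotProduct, Matrix.cons_val', Matrix.cons_val_zero,
      Matrix.cons_val_one, Matrix.head_cons, Matrix.empty_val',
      Matrix.cons_val_fin_one, Matrix.head_fin_const, Matrix.of_apply] at e00 e01 e10
    exact ⟨e00, e01, e10⟩
  by_cases hb : ¬ (p : ZMod (p^n)) ∣ b
  · obtain ⟨d, hbd⟩ := ((unit_iff b).mpr hb).exists_right_inv
    apply main (fun H => H 0 1) (fun H => H 1 1)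
      (fun H => H 0 0 - H 1 1 - 2*a*d*(H 0 1)) (fun H => H 1 0 - c*d*(H 0 1))
    · intro H hH
      obtain ⟨e00, e01, e10⟩ := entries H hH
      linear_combination d * e01 - q * (H 0 0 - H 1 1) * hbd
    · intro H hH
      obtain ⟨e00, e01, e10⟩ := entries H hH
      linear_combination (-d) * e00 - q * (H 1 0) * hbd
    · intro H1 h1 H2 h2 heq
      simp only [Prod.mk.injEq] at heq
      obtain ⟨q1, q2, q3, q4⟩ := heq
      have hx : H1 0 0 = H2 0 0 := by linear_combination q3 + q2 + 2*a*d*q1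
      have hz : H1 1 0 = H2 1 0 := by linear_combination q4 + c*d*q1
      ext i j
      fin_cases i <;> fin_cases j <;> assumption
  push_neg at hb
  by_cases hc : ¬ (p : ZMod (p^n)) ∣ c
  · obtain ⟨d, hcd⟩ := ((unit_iff c).mpr hc).exists_right_inv
    apply main (fun H => H 1 0) (fun H => H 1 1)
      (fun H => H 0 1 - b*d*(H 1 0)) (fun H => H 0 0 - H 1 1 - 2*a*d*(H 1 0))
    · intro H hH
      obtain ⟨e00, e01, e10⟩ := entries H hH
      linear_combination d * e00 - q * (H 0 1) * hcd
    · intro H hH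
      obtain ⟨e00, e01, e10⟩ := entries H hH
      linear_combination (-d) * e10 - q * (H 0 0 - H 1 1) * hcd
    · intro H1 h1 H2 h2 heq
      simp only [Prod.mk.injEq] at heq
      obtain ⟨q1, q2, q3, q4⟩ := heq
      have hy : H1 0 1 = H2 0 1 := by linear_combination q3 + b*d*q1
      have hx : H1 0 0 = H2 0 0 := by linear_combination q4 + q2 + 2*a*d*q1
      ext i j
      fin_cases i <;> fin_cases j <;> assumption
  push_neg at hc
  have ha : ¬ (p : ZMod (p^n)) ∣ a := fun h => hnv ⟨h, hb, hc⟩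
  have h2a : IsUnit (2 * a) := two_unit.mul ((unit_iff a).mpr ha)
  obtain ⟨d, h2ad⟩ := h2a.exists_right_inv
  apply main (fun H => H 0 0) (fun H => H 1 1)
    (fun H => H 0 1 - b*d*(H 0 0 - H 1 1)) (fun H => H 1 0 - c*d*(H 0 0 - H 1 1))
  · intro H hH
    obtain ⟨e00, e01, e10⟩ := entries H hH
    linear_combination (-d) * e01 - q * (H 0 1) * h2ad
  · intro H hH
    obtain ⟨e00, e01, e10⟩ := entries H hH
    linear_combination d * e10 - q * (H 1 0) * h2ad
  · intro H1 h1 H2 h2 heq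
    simp only [Prod.mk.injEq] at heq
    obtain ⟨q1, q2, q3, q4⟩ := heq
    have hy : H1 0 1 = H2 0 1 := by linear_combination q3 + b*d*(q1 - q2)
    have hz : H1 1 0 = H2 1 0 := by linear_combination q4 + c*d*(q1 - q2)
    ext i j
    fin_cases i <;> fin_cases j <;> assumption


/-- For odd prime `p` and `g ∈ SL₂(ℤ/pⁿℤ)` written as
`g = (Tr g / 2)·I + pʳ·[[a,b],[c,-a]]` with not all of `a, b, c` divisible by
`p`, the centralizer of `g` in `SL₂(ℤ/pⁿℤ)` has size at most `8·p^{n+2r}`.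
Here `t` denotes `Tr g / 2`. -/
theorem stmt_11 (p n : ℕ) (hp : p.Prime) (hodd : Odd p) (hn : 1 ≤ n)
    (g : Matrix.SpecialLinearGroup (Fin 2) (ZMod (p ^ n)))
    (t a b c : ZMod (p ^ n)) (r : ℕ)
    (ht : 2 * t = Matrix.trace (g : Matrix (Fin 2) (Fin 2) (ZMod (p ^ n))))
    (hg : (g : Matrix (Fin 2) (Fin 2) (ZMod (p ^ n)))
      = t • (1 : Matrix (Fin 2) (Fin 2) (ZMod (p ^ n)))
        + ((p : ZMod (p ^ n)) ^ r) • !![a, b; c, -a])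
    (hnv : ¬ (((p : ZMod (p ^ n)) ∣ a) ∧ ((p : ZMod (p ^ n)) ∣ b) ∧
      ((p : ZMod (p ^ n)) ∣ c))) :
    {h : Matrix.SpecialLinearGroup (Fin 2) (ZMod (p ^ n)) | h * g = g * h}.ncard
      ≤ 8 * p ^ (n + 2 * r) := by
  classical
  haveI : NeZero (p^n) := ⟨pow_ne_zero n hp.pos.ne'⟩
  have two_unit : IsUnit (2 : ZMod (p^n)) := by
    have : IsUnit ((2:ℕ) : ZMod (p^n)) :=
      (ZMod.isUnit_iff_coprime 2 (p^n)).mpr (Nat.coprime_two_left.mpr hodd.pow)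
    simpa using this
  set q : ZMod (p^n) := (p : ZMod (p^n))^r with hq
  set g₀ : Matrix (Fin 2) (Fin 2) (ZMod (p^n)) := !![a,b;c,-a] with hg₀
  set C : Finset (Matrix (Fin 2) (Fin 2) (ZMod (p^n))) := Finset.univ.filter (fun H => q • (H * g₀) = q • (g₀ * H))
    with hC
  have hCcard : C.card ≤ p^(2*n+2*r) :=
    aux_comm_card hp hodd hn a b c r hnv (aux_ann_card hp hn r)
      (fun x => aux_isUnit_iff hp hn x) two_unit
  set S : Finset (Matrix.SpecialLinearGroup (Fin 2) (ZMod (p^n))) := Finset.univ.filter (fun h => h * g = g * h) with hS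
  have hset : {h : (Matrix.SpecialLinearGroup (Fin 2) (ZMod (p^n))) | h * g = g * h} = (S : Set (Matrix.SpecialLinearGroup (Fin 2) (ZMod (p^n)))) := by
    ext h; simp [hS]
  rw [hset, Set.ncard_coe_finset]
  -- commuting in (Matrix.SpecialLinearGroup (Fin 2) (ZMod (p^n))) implies matrix commutant condition
  have hcomm : ∀ h : (Matrix.SpecialLinearGroup (Fin 2) (ZMod (p^n))), h * g = g * h →
      q • ((h : Matrix (Fin 2) (Fin 2) (ZMod (p^n))) * g₀) = q • (g₀ * (h : Matrix (Fin 2) (Fin 2) (ZMod (p^n)))) := by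
    intro h hcm
    have hmat : (h : Matrix (Fin 2) (Fin 2) (ZMod (p^n))) * (g : Matrix (Fin 2) (Fin 2) (ZMod (p^n))) = (g : Matrix (Fin 2) (Fin 2) (ZMod (p^n))) * (h : Matrix (Fin 2) (Fin 2) (ZMod (p^n))) := by
      have := congrArg (fun x : (Matrix.SpecialLinearGroup (Fin 2) (ZMod (p^n))) => (x : Matrix (Fin 2) (Fin 2) (ZMod (p^n)))) hcm
      simpa using this
    rw [hg] at hmat
    have h1 : (h : Matrix (Fin 2) (Fin 2) (ZMod (p^n))) * (t • 1) = (t • (1 : Matrix (Fin 2) (Fin 2) (ZMod (p^n)))) * (h : Matrix (Fin 2) (Fin 2) (ZMod (p^n))) := by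
      rw [mul_smul_comm, smul_mul_assoc, Matrix.mul_one, Matrix.one_mul]
    rw [mul_add, add_mul, h1] at hmat
    have h2 : (h : Matrix (Fin 2) (Fin 2) (ZMod (p^n))) * (q • g₀) = (q • g₀) * (h : Matrix (Fin 2) (Fin 2) (ZMod (p^n))) := add_left_cancel hmat
    rw [mul_smul_comm, smul_mul_assoc] at h2
    exact h2
  set f : (ZMod (p^n))ˣ × (Matrix.SpecialLinearGroup (Fin 2) (ZMod (p^n))) → Matrix (Fin 2) (Fin 2) (ZMod (p^n)) :=
    fun x => ((x.1 : ZMod (p^n))) • (x.2 : Matrix (Fin 2) (Fin 2) (ZMod (p^n))) with hf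
  set T : Finset ((ZMod (p^n))ˣ × (Matrix.SpecialLinearGroup (Fin 2) (ZMod (p^n)))) :=
    (Finset.univ : Finset (ZMod (p^n))ˣ) ×ˢ S with hT
  have hmaps : ∀ x ∈ T, f x ∈ C := by
    rintro ⟨u, h⟩ hx
    rw [hT, Finset.mem_product] at hx
    have hcm := (Finset.mem_filter.mp hx.2).2
    have hc := hcomm h hcm
    rw [hC, Finset.mem_filter]
    refine ⟨Finset.mem_univ _, ?_⟩
    show q • ((((u : ZMod (p^n))) • (h : Matrix (Fin 2) (Fin 2) (ZMod (p^n)))) * g₀)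
        = q • (g₀ * (((u : ZMod (p^n))) • (h : Matrix (Fin 2) (Fin 2) (ZMod (p^n)))))
    calc q • ((((u : ZMod (p^n))) • (h : Matrix (Fin 2) (Fin 2) (ZMod (p^n)))) * g₀)
        = (u : ZMod (p^n)) • (q • ((h : Matrix (Fin 2) (Fin 2) (ZMod (p^n))) * g₀)) := by
          rw [smul_mul_assoc, smul_comm]
      _ = (u : ZMod (p^n)) • (q • (g₀ * (h : Matrix (Fin 2) (Fin 2) (ZMod (p^n))))) := by rw [hc]
      _ = q • (g₀ * (((u : ZMod (p^n))) • (h : Matrix (Fin 2) (Fin 2) (ZMod (p^n))))) := by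
          rw [mul_smul_comm, smul_comm]
  have hfib : ∀ N ∈ C, (T.filter (fun x => f x = N)).card ≤ 2 := by
    intro N _
    rcases (T.filter (fun x => f x = N)).eq_empty_or_nonempty with he | ⟨x₀, hx₀⟩
    · simp [he]
    obtain ⟨u₀, h₀⟩ := x₀
    rw [Finset.mem_filter] at hx₀
    have hfx₀ : ((u₀ : ZMod (p^n))) • (h₀ : Matrix (Fin 2) (Fin 2) (ZMod (p^n))) = N := hx₀.2
    have hdet : ∀ (u : (ZMod (p^n))ˣ) (h : (Matrix.SpecialLinearGroup (Fin 2) (ZMod (p^n)))),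
        ((u : ZMod (p^n))) • (h : Matrix (Fin 2) (Fin 2) (ZMod (p^n))) = N → ((u : ZMod (p^n)))^2 = N.det := by
      intro u h hfx
      have d1 := congrArg Matrix.det hfx
      rw [Matrix.det_smul] at d1
      simpa [h.prop] using d1
    refine (Finset.card_le_card_of_injOn
      (t := ({(1 : ZMod (p^n)), -1} : Finset (ZMod (p^n))))
      (fun x => ((x.1 * u₀⁻¹ : (ZMod (p^n))ˣ) : ZMod (p^n))) ?_ ?_).trans
      ((Finset.card_insert_le _ _).trans (by simp))
    · rintro ⟨u, h⟩ hx
      rw [Finset.mem_coe, Finset.mem_filter] at hx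
      have hu2 : ((u : ZMod (p^n)))^2 = ((u₀ : ZMod (p^n)))^2 := by
        rw [hdet u h hx.2, hdet u₀ h₀ hfx₀]
      have huu : u^2 = u₀^2 := by
        apply Units.ext
        rw [Units.val_pow_eq_pow_val, Units.val_pow_eq_pow_val]
        exact hu2
      have hs1 : ((u * u₀⁻¹ : (ZMod (p^n))ˣ) : ZMod (p^n))^2 = 1 := by
        rw [← Units.val_pow_eq_pow_val]
        have : (u * u₀⁻¹)^2 = 1 := by
          rw [mul_pow, inv_pow, huu, mul_inv_cancel]
        rw [this, Units.val_one]
      rcases aux_sq_one hp hodd hn _ hs1 with h1 | h1 <;>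
        simp [h1, Finset.mem_insert]
    · rintro ⟨u, h⟩ hu ⟨v, k⟩ hv heq
      simp only [Finset.coe_filter, Set.mem_setOf_eq] at hu hv
      have huv : u = v := by
        have := Units.ext heq
        exact mul_right_cancel this
      have hmk : (h : Matrix (Fin 2) (Fin 2) (ZMod (p^n))) = (k : Matrix (Fin 2) (Fin 2) (ZMod (p^n))) := by
        have hE : f (u, h) = f (v, k) := hu.2.trans hv.2.symm
        simp only [hf] at hE
        rw [← huv] at hE
        have := congrArg (fun A => (((u⁻¹ : (ZMod (p^n))ˣ) : ZMod (p^n))) • A) hE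
        simpa [smul_smul, ← Units.val_mul] using this
      exact Prod.ext huv (Subtype.ext hmk)
  have hTcard : T.card ≤ 2 * C.card :=
    Finset.card_le_mul_card_image_of_maps_to hmaps 2 hfib
  have hTcard' : T.card = (Nat.totient (p^n)) * S.card := by
    rw [hT, Finset.card_product, Finset.card_univ, ZMod.card_units_eq_totient]
  have htot : Nat.totient (p^n) = p^(n-1) * (p-1) :=
    Nat.totient_prime_pow hp (by omega)
  have key : p^(n-1) * (p-1) * S.card ≤ 2 * p^(2*n+2*r) := by
    rw [← htot, ← hTcard']
    exact hTcard.trans (Nat.mul_le_mul_left 2 hCcard)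
  -- final arithmetic
  have hbig : 2 * p^(2*n+2*r) ≤ p^(n-1) * (p-1) * (8 * p^(n+2*r)) := by
    have h2p : 2 * p ≤ 8 * (p - 1) := by
      have := hp.two_le; omega
    have e1 : p^(n-1) * p^(n+2*r) = p^(2*n+2*r-1) := by
      rw [← pow_add]; congr 1; omega
    have e2 : p * p^(2*n+2*r-1) = p^(2*n+2*r) := by
      rw [← pow_succ']; congr 1; omega
    calc 2 * p^(2*n+2*r) = 2 * p * (p^(n-1) * p^(n+2*r)) := by
          rw [e1, ← e2]; ring
      _ ≤ 8 * (p-1) * (p^(n-1) * p^(n+2*r)) := Nat.mul_le_mul_right _ h2p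
      _ = p^(n-1) * (p-1) * (8 * p^(n+2*r)) := by ring
  have hpos : 0 < p^(n-1) * (p-1) := by
    have := hp.two_le
    exact Nat.mul_pos (pow_pos hp.pos _) (by omega)
  have := key.trans hbig
  exact Nat.le_of_mul_le_mul_left (by linarith [this]) hpos
end

section
/- For N ≥ 2 and 0 < s ≤ 1/2, if X is uniform on {1/a : a ∈ [N]} perturbed so that X = 1/c + θ/(c³) with c uniform on [N] and |θ| ≤ 2 (so X ∈ (0,1]), then log E[X^s] ≤ −s·log N + s + s² + C·(log N)/N for an absolute constant C > 0. -/
open Real Finset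

/-- Bernoulli-derived bound: `(1-s) * c^(-s) ≤ c^(1-s) - (c-1)^(1-s)`. -/
lemma aux_L1 (s c : ℝ) (hs0 : 0 ≤ s) (hs1 : s ≤ 1/2) (hc : 1 ≤ c) :
    (1 - s) * c ^ (-s) ≤ c ^ (1 - s) - (c - 1) ^ (1 - s) := by
  have hc0 : (0:ℝ) < c := by linarith
  have ht : (-1:ℝ) ≤ -1/c := by
    rw [neg_div, neg_le_neg_iff]
    exact div_le_one_of_le₀ hc hc0.le
  have hB := rpow_one_add_le_one_add_mul_self (s := -1/c) (p := 1 - s) ht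
    (by linarith) (by linarith)
  have h1 : 1 + (-1/c) = (c - 1)/c := by field_simp; ring
  rw [h1, Real.div_rpow (by linarith) hc0.le] at hB
  have hcs : (0:ℝ) < c ^ (1 - s) := Real.rpow_pos_of_pos hc0 _
  have hsplit : c ^ (1 - s) = c * c ^ (-s) := by
    rw [show (1:ℝ) - s = 1 + (-s) by ring, Real.rpow_add hc0, Real.rpow_one]
  have hB2 : (c - 1) ^ (1 - s) ≤ (1 + (1 - s) * (-1/c)) * c ^ (1 - s) := by
    rw [← div_le_iff₀ hcs] at *
    exact hB
  have hexp : (1 + (1 - s) * (-1/c)) * c ^ (1 - s)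
      = c ^ (1 - s) - (1 - s) * c ^ (-s) := by
    rw [hsplit]; field_simp; ring
  rw [hexp] at hB2
  linarith

lemma aux_L2 (s : ℝ) (hs0 : 0 < s) (hs1 : s ≤ 1/2) :
    ∀ n : ℕ, 1 ≤ n → ∑ c ∈ Icc 1 n, (c:ℝ) ^ (-s) ≤ 1 + ((n:ℝ) ^ (1 - s) - 1)/(1 - s) := by
  intro n hn
  induction n, hn using Nat.le_induction with
  | base => simp
  | succ n hn ih =>
    rw [Finset.sum_Icc_succ_top (by omega)]
    have h1n : (1:ℝ) ≤ (n:ℝ) := by exact_mod_cast hn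
    have h1s : (0:ℝ) < 1 - s := by linarith
    have key : ((n:ℝ) + 1) ^ (-s) ≤ (((n:ℝ) + 1) ^ (1 - s) - (n:ℝ) ^ (1 - s))/(1 - s) := by
      have h := aux_L1 s ((n:ℝ) + 1) hs0.le hs1 (by linarith)
      have h2 : ((n:ℝ) + 1) - 1 = (n:ℝ) := by ring
      rw [h2] at h
      rw [le_div_iff₀ h1s]
      linarith
    have hsum : ((n:ℝ) ^ (1 - s) - 1)/(1 - s) + (((n:ℝ) + 1) ^ (1 - s) - (n:ℝ) ^ (1 - s))/(1 - s)
        = (((n:ℝ) + 1) ^ (1 - s) - 1)/(1 - s) := by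
      rw [← add_div]; ring_nf
    push_cast
    linarith

lemma aux_L3 : ∀ n : ℕ, 1 ≤ n → ∑ c ∈ Icc 1 n, 1/((c:ℝ))^2 ≤ 2 - 1/(n:ℝ) := by
  intro n hn
  induction n, hn using Nat.le_induction with
  | base => norm_num
  | succ n hn ih =>
    rw [Finset.sum_Icc_succ_top (by omega)]
    have hn0 : (0:ℝ) < n := by exact_mod_cast hn
    have key : 1/((n:ℝ) + 1)^2 ≤ 1/(n:ℝ) - 1/((n:ℝ) + 1) := by
      rw [div_sub_div _ _ (ne_of_gt hn0) (by positivity)]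
      rw [div_le_div_iff₀ (by positivity) (by positivity)]
      nlinarith
    push_cast
    push_cast at ih
    linarith

lemma aux_L4 (s : ℝ) (hs0 : 0 < s) (hs1 : s ≤ 1/2) :
    1/(1 - s) + s^2/6 ≤ Real.exp (s + s^2) := by
  have hx : (0:ℝ) ≤ s + s^2 := by nlinarith
  have h := Real.sum_le_exp_of_nonneg hx 4
  have hsum : ∑ i ∈ Finset.range 4, (s + s^2) ^ i / (i.factorial : ℝ)
      = 1 + (s + s^2) + (s + s^2)^2/2 + (s + s^2)^3/6 := by
    simp [Finset.sum_range_succ, Nat.factorial]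
    try ring
  rw [hsum] at h
  have h1s : (0:ℝ) < 1 - s := by linarith
  have key : 1/(1 - s) + s^2/6 ≤ 1 + (s + s^2) + (s + s^2)^2/2 + (s + s^2)^3/6 := by
    rw [div_add' _ _ _ (ne_of_gt h1s), div_le_iff₀ h1s]
    nlinarith [sq_nonneg s, sq_nonneg (s - 1/2), pow_pos hs0 3, pow_pos hs0 4, sq_nonneg (s*(s-1/2))]
  linarith

set_option maxHeartbeats 1000000 in
/-- For `N ≥ 2`, `0 < s ≤ 1/2` and `X = 1/c + θ(c)/c³` with `c` uniform on
`{1, …, N}`, `|θ| ≤ 2` and `X > 0`, one has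
`log E[X^s] ≤ −s·log N + s + s² + C·(log N)/N` with an absolute constant `C`. -/
theorem stmt_15 :
    ∃ C : ℝ, 0 < C ∧ ∀ N : ℕ, 2 ≤ N → ∀ s : ℝ, 0 < s → s ≤ 1 / 2 →
      ∀ θ : ℕ → ℝ, (∀ c, |θ c| ≤ 2) →
      (∀ c ∈ Finset.Icc 1 N, (0 : ℝ) < 1 / (c : ℝ) + θ c / (c : ℝ) ^ 3) →
      Real.log ((1 / (N : ℝ)) * ∑ c ∈ Finset.Icc 1 N,
          (1 / (c : ℝ) + θ c / (c : ℝ) ^ 3) ^ s)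
        ≤ -s * Real.log N + s + s ^ 2 + C * Real.log N / N := by
  refine ⟨Real.exp 24, Real.exp_pos 24, ?_⟩
  intro N hN s hs0 hs1 θ hθ hpos
  have hN2 : (2:ℝ) ≤ (N:ℝ) := by exact_mod_cast hN
  have hN1 : (1:ℝ) ≤ (N:ℝ) := by linarith
  have hN0 : (0:ℝ) < N := by linarith
  have h1s : (0:ℝ) < 1 - s := by linarith
  have hlog2 : (0.6931471803:ℝ) < Real.log 2 := Real.log_two_gt_d9
  have hlogN : Real.log 2 ≤ Real.log N := Real.log_le_log (by norm_num) hN2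
  have hlog0 : (0:ℝ) < Real.log N := by linarith
  set D : ℝ := Real.exp 24 * Real.log N / N with hD
  have hD0 : (0:ℝ) ≤ D := by
    apply div_nonneg _ hN0.le
    exact mul_nonneg (Real.exp_pos 24).le hlog0.le
  have hNs_pos : (0:ℝ) < (N:ℝ) ^ (-s) := Real.rpow_pos_of_pos hN0 _
  -- pointwise bound
  have hpt : ∀ c ∈ Finset.Icc 1 N,
      (1/(c:ℝ) + θ c/(c:ℝ)^3) ^ s ≤ (c:ℝ) ^ (-s) + 2*s/(c:ℝ)^2 := by
    intro c hc
    have hc1 : 1 ≤ c := (Finset.mem_Icc.mp hc).1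
    have hcR : (1:ℝ) ≤ (c:ℝ) := by exact_mod_cast hc1
    have hc0 : (0:ℝ) < (c:ℝ) := by linarith
    set t : ℝ := θ c / (c:ℝ)^2 with htdef
    have hfact : 1/(c:ℝ) + θ c/(c:ℝ)^3 = (1/(c:ℝ)) * (1 + t) := by
      rw [htdef]; field_simp
    have hf := hpos c hc
    have h1t : (0:ℝ) < 1 + t := by
      rw [hfact] at hf
      have hinv : (0:ℝ) < 1/(c:ℝ) := by positivity
      nlinarith
    have hbern : (1 + t) ^ s ≤ 1 + s * t :=
      rpow_one_add_le_one_add_mul_self (by linarith) hs0.le (by linarith)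
    have hθ2 : θ c ≤ 2 := le_of_abs_le (hθ c)
    have hts : s * t ≤ 2*s/(c:ℝ)^2 := by
      rw [htdef, show s * (θ c/(c:ℝ)^2) = (s * θ c)/(c:ℝ)^2 from by ring,
        show 2*s/(c:ℝ)^2 = (s*2)/(c:ℝ)^2 from by ring]
      gcongr
    have hle1 : (c:ℝ) ^ (-s) ≤ 1 :=
      Real.rpow_le_one_of_one_le_of_nonpos hcR (by linarith)
    have hcinv : (1/(c:ℝ)) ^ s = (c:ℝ) ^ (-s) := by
      rw [one_div, Real.inv_rpow hc0.le, ← Real.rpow_neg hc0.le]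
    calc (1/(c:ℝ) + θ c/(c:ℝ)^3) ^ s
        = (c:ℝ) ^ (-s) * (1 + t) ^ s := by
          rw [hfact, Real.mul_rpow (by positivity) h1t.le, hcinv]
      _ ≤ (c:ℝ) ^ (-s) * (1 + s * t) :=
          mul_le_mul_of_nonneg_left hbern (Real.rpow_pos_of_pos hc0 (-s)).le
      _ ≤ (c:ℝ) ^ (-s) * (1 + 2*s/(c:ℝ)^2) := by
          apply mul_le_mul_of_nonneg_left (by linarith)
          positivity
      _ = (c:ℝ) ^ (-s) + (c:ℝ) ^ (-s) * (2*s/(c:ℝ)^2) := by ring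
      _ ≤ (c:ℝ) ^ (-s) + 2*s/(c:ℝ)^2 := by
          have h2 : (c:ℝ) ^ (-s) * (2*s/(c:ℝ)^2) ≤ 2*s/(c:ℝ)^2 :=
            mul_le_of_le_one_left (by positivity) hle1
          linarith
  -- sum bound
  have h11 : (1:ℝ) ≤ 1/(1 - s) := by rw [le_div_iff₀ h1s]; linarith
  have hS : ∑ c ∈ Finset.Icc 1 N, (1/(c:ℝ) + θ c/(c:ℝ)^3) ^ s
      ≤ (N:ℝ) ^ (1 - s)/(1 - s) + 3 := by
    have hstep : ∑ c ∈ Finset.Icc 1 N, (1/(c:ℝ) + θ c/(c:ℝ)^3) ^ s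
        ≤ ∑ c ∈ Finset.Icc 1 N, ((c:ℝ) ^ (-s) + 2*s/(c:ℝ)^2) :=
      Finset.sum_le_sum hpt
    have hsplit : ∑ c ∈ Finset.Icc 1 N, ((c:ℝ) ^ (-s) + 2*s/(c:ℝ)^2)
        = (∑ c ∈ Finset.Icc 1 N, (c:ℝ) ^ (-s))
          + 2*s*(∑ c ∈ Finset.Icc 1 N, 1/(c:ℝ)^2) := by
      rw [Finset.sum_add_distrib, Finset.mul_sum]
      congr 1
      apply Finset.sum_congr rfl
      intro c _
      ring
    have h2 := aux_L2 s hs0 hs1 N (by omega)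
    have h3 := aux_L3 N (by omega)
    have h3' : ∑ c ∈ Finset.Icc 1 N, 1/(c:ℝ)^2 ≤ 2 := by
      have : (0:ℝ) < 1/(N:ℝ) := by positivity
      linarith
    have h4 : ((N:ℝ) ^ (1 - s) - 1)/(1 - s) = (N:ℝ) ^ (1 - s)/(1 - s) - 1/(1 - s) := by
      rw [sub_div]
    have h5 : 2*s*(∑ c ∈ Finset.Icc 1 N, 1/(c:ℝ)^2) ≤ 2*s*2 := by
      apply mul_le_mul_of_nonneg_left h3' (by linarith)
    rw [hsplit] at hstep
    linarith
  -- average bound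
  have hNs1 : (N:ℝ) ^ (1 - s) = (N:ℝ) * (N:ℝ) ^ (-s) := by
    rw [show (1:ℝ) - s = 1 + (-s) by ring, Real.rpow_add hN0, Real.rpow_one]
  have havg : (1/(N:ℝ)) * ∑ c ∈ Finset.Icc 1 N, (1/(c:ℝ) + θ c/(c:ℝ)^3) ^ s
      ≤ (N:ℝ) ^ (-s)/(1 - s) + 3/(N:ℝ) := by
    have h6 : (1/(N:ℝ)) * ∑ c ∈ Finset.Icc 1 N, (1/(c:ℝ) + θ c/(c:ℝ)^3) ^ s
        ≤ (1/(N:ℝ)) * ((N:ℝ) ^ (1 - s)/(1 - s) + 3) :=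
      mul_le_mul_of_nonneg_left hS (by positivity)
    have h7 : (1/(N:ℝ)) * ((N:ℝ) ^ (1 - s)/(1 - s) + 3)
        = (N:ℝ) ^ (-s)/(1 - s) + 3/(N:ℝ) := by
      rw [hNs1]; field_simp
    linarith
  -- key inequality
  have hkey : 3/(N:ℝ) ≤ (N:ℝ) ^ (-s) * (s^2/6) + (N:ℝ) ^ (-s) * D := by
    rcases le_or_gt 18 (s^2 * (N:ℝ) ^ (1 - s)) with hA | hB
    · have h1 : (N:ℝ) ^ (-s) * (s^2/6) = s^2 * (N:ℝ) ^ (1 - s)/(6*(N:ℝ)) := by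
        rw [hNs1]; field_simp
      have h2 : 3/(N:ℝ) ≤ s^2 * (N:ℝ) ^ (1 - s)/(6*(N:ℝ)) := by
        rw [div_le_div_iff₀ (by linarith) (by positivity)]
        nlinarith
      nlinarith [mul_nonneg hNs_pos.le hD0]
    · set a : ℝ := (N:ℝ) ^ ((1:ℝ)/4) with ha
      have ha0 : (0:ℝ) < a := Real.rpow_pos_of_pos hN0 _
      have ha1 : (1:ℝ) ≤ a := Real.one_le_rpow hN1 (by norm_num)
      have ha2 : a^2 = (N:ℝ) ^ ((1:ℝ)/2) := by
        rw [ha, ← Real.rpow_natCast ((N:ℝ) ^ ((1:ℝ)/4)) 2, ← Real.rpow_mul hN0.le]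
        norm_num
      have hhalf : (N:ℝ) ^ ((1:ℝ)/2) ≤ (N:ℝ) ^ (1 - s) :=
        Real.rpow_le_rpow_of_exponent_le hN1 (by linarith)
      have hsa : s * a ≤ 5 := by
        have e : (s*a)^2 = s^2 * (N:ℝ) ^ ((1:ℝ)/2) := by rw [← ha2]; ring
        have h5 : (s*a)^2 ≤ 25 := by
          rw [e]
          calc s^2 * (N:ℝ) ^ ((1:ℝ)/2) ≤ s^2 * (N:ℝ) ^ (1 - s) :=
                mul_le_mul_of_nonneg_left hhalf (sq_nonneg s)
            _ ≤ 25 := by linarith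
        nlinarith [mul_nonneg hs0.le ha0.le]
      have hloga : Real.log (N:ℝ) = 4 * Real.log a := by
        rw [ha, Real.log_rpow hN0]; ring
      have hslog : s * Real.log N ≤ 20 := by
        have hla : Real.log a ≤ a := by
          have := Real.log_le_sub_one_of_pos ha0
          linarith
        rw [hloga]
        nlinarith [mul_le_mul_of_nonneg_left hla hs0.le]
      have hNs_le : Real.exp (-20) ≤ (N:ℝ) ^ (-s) := by
        rw [Real.rpow_def_of_pos hN0]
        apply Real.exp_le_exp.mpr
        nlinarith
      have hexp4 : (5:ℝ) ≤ Real.exp 4 := by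
        have := Real.add_one_le_exp (4:ℝ)
        linarith
      have hprod : (3:ℝ) ≤ Real.exp (-20) * (Real.exp 24 * Real.log 2) := by
        rw [show Real.exp (-20) * (Real.exp 24 * Real.log 2)
            = (Real.exp (-20) * Real.exp 24) * Real.log 2 by ring,
          ← Real.exp_add]
        norm_num
        nlinarith
      have hgoal : 3/(N:ℝ) ≤ (N:ℝ) ^ (-s) * D := by
        rw [hD]
        rw [div_le_iff₀ hN0]
        have h8 : (N:ℝ) ^ (-s) * (Real.exp 24 * Real.log N / (N:ℝ)) * (N:ℝ)
            = (N:ℝ) ^ (-s) * (Real.exp 24 * Real.log N) := by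
          field_simp
        rw [h8]
        calc (3:ℝ) ≤ Real.exp (-20) * (Real.exp 24 * Real.log 2) := hprod
          _ ≤ (N:ℝ) ^ (-s) * (Real.exp 24 * Real.log N) := by
              apply mul_le_mul hNs_le _ (by positivity) hNs_pos.le
              apply mul_le_mul_of_nonneg_left hlogN (Real.exp_pos 24).le
      nlinarith [mul_nonneg hNs_pos.le (sq_nonneg s)]
  -- assembling
  have hL4 := aux_L4 s hs0 hs1
  have hexpD : Real.exp (s + s^2) + D ≤ Real.exp (s + s^2 + D) := by
    rw [show Real.exp (s + s^2 + D) = Real.exp (s + s^2) * Real.exp D from Real.exp_add _ _]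
    nlinarith [Real.add_one_le_exp D, Real.one_le_exp (by nlinarith : (0:ℝ) ≤ s + s^2)]
  have hmain : (1/(N:ℝ)) * ∑ c ∈ Finset.Icc 1 N, (1/(c:ℝ) + θ c/(c:ℝ)^3) ^ s
      ≤ (N:ℝ) ^ (-s) * Real.exp (s + s^2 + D) := by
    have e1 : (N:ℝ) ^ (-s)/(1 - s) + 3/(N:ℝ)
        ≤ (N:ℝ) ^ (-s) * (1/(1 - s)) + (N:ℝ) ^ (-s) * (s^2/6) + (N:ℝ) ^ (-s) * D := by
      have : (N:ℝ) ^ (-s)/(1 - s) = (N:ℝ) ^ (-s) * (1/(1 - s)) := by ring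
      linarith
    have e2 : (N:ℝ) ^ (-s) * (1/(1 - s)) + (N:ℝ) ^ (-s) * (s^2/6) + (N:ℝ) ^ (-s) * D
        ≤ (N:ℝ) ^ (-s) * (Real.exp (s + s^2) + D) := by
      nlinarith
    have e3 : (N:ℝ) ^ (-s) * (Real.exp (s + s^2) + D)
        ≤ (N:ℝ) ^ (-s) * Real.exp (s + s^2 + D) :=
      mul_le_mul_of_nonneg_left hexpD hNs_pos.le
    linarith
  have hLHS_pos : (0:ℝ) < (1/(N:ℝ)) * ∑ c ∈ Finset.Icc 1 N, (1/(c:ℝ) + θ c/(c:ℝ)^3) ^ s := by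
    apply mul_pos (by positivity)
    apply Finset.sum_pos (fun c hc => Real.rpow_pos_of_pos (hpos c hc) s)
    exact ⟨1, Finset.mem_Icc.mpr ⟨le_refl 1, by omega⟩⟩
  have hlogle := Real.log_le_log hLHS_pos hmain
  rw [Real.log_mul (ne_of_gt hNs_pos) (Real.exp_ne_zero _), Real.log_rpow hN0,
    Real.log_exp] at hlogle
  rw [hD] at hlogle
  linarith
end
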